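/- arXiv:2002.10498 — 3 statements merged into one kernel-verified Lean document; each statement's English description precedes it below -/
import Mathlib

section
/- (Macronode partition) In a compressed strongly connected graph, the vertex sets of the macronodes centered at the bivalent nodes partition the vertex set: every node belongs to exactly one macronode. -/
/-- A directed multigraph: arcs `E` with tail and head maps into nodes `V`. -/
structure MultiDigraph (V E : Type) where
  tail : E → V
  head : E → V

namespace MultiDigraph

variable {V E : Type} (G : MultiDigraph V E)

/-- A walk is a (possibly empty) list of arcs that chain head-to-tail. -/
def IsWalk (W : List E) : Prop := W.Chain' (fun a b => G.head a = G.tail b)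

/-- The node sequence `v₀, v₁, …, v_ℓ` of a nonempty walk (empty for the empty walk). -/
def nodes : List E → List V
  | [] => []
  | e :: W => G.tail e :: (e :: W).map G.head

/-- The start node of a nonempty walk. -/
def src (W : List E) : Option V := W.head?.map G.tail

/-- The end node of a nonempty walk. -/
def dst (W : List E) : Option V := W.getLast?.map G.head

/-- A path: a walk whose nodes are all distinct, except that the last node may
equal the first one (closed path). -/
def IsPath (W : List E) : Prop :=
  G.IsWalk W ∧ (G.nodes W).dropLast.Nodup ∧ (G.nodes W).tail.Nodup

/-- `P` is a forbidden path for the pair of arcs `(eR, eL)`: a non-empty path from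
`tail eR` to `head eL` whose first arc differs from `eR` and last arc differs from `eL`. -/
def ForbiddenPath (eR eL : E) (P : List E) : Prop :=
  G.IsPath P ∧ P ≠ [] ∧ G.src P = some (G.tail eR) ∧ G.dst P = some (G.head eL) ∧
    P.head? ≠ some eR ∧ P.getLast? ≠ some eL

/-- A walk `e₀ … e_ℓ` is an omnitig if for all `1 ≤ i ≤ j ≤ ℓ` there is no
forbidden path from `tail e_j` to `head e_{i-1}`. -/
def IsOmnitig (W : List E) : Prop :=
  G.IsWalk W ∧ ∀ i j : ℕ, (hi : 1 ≤ i) → (hij : i ≤ j) → (hj : j < W.length) →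
    ¬ ∃ P, G.ForbiddenPath (W[j]'hj) (W[i-1]'(by omega)) P

/-- `u` reaches `v` by a (possibly empty) walk. -/
def Reaches (u v : V) : Prop :=
  u = v ∨ ∃ W, G.IsWalk W ∧ G.src W = some u ∧ G.dst W = some v

def StronglyConnected : Prop := ∀ u v : V, G.Reaches u v

/-- In-degree of a node. -/
noncomputable def inDeg (v : V) : ℕ := Nat.card {e : E // G.head e = v}

/-- Out-degree of a node. -/
noncomputable def outDeg (v : V) : ℕ := Nat.card {e : E // G.tail e = v}

def JoinArc (e : E) : Prop := 1 < G.inDeg (G.head e)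

def SplitArc (e : E) : Prop := 1 < G.outDeg (G.tail e)

def Bivalent (v : V) : Prop := 1 < G.inDeg v ∧ 1 < G.outDeg v

def JoinFree (W : List E) : Prop := ∀ e ∈ W, ¬ G.JoinArc e

def SplitFree (W : List E) : Prop := ∀ e ∈ W, ¬ G.SplitArc e

/-- A closed walk covering every arc at least once. -/
def IsClosedArcCovering (W : List E) : Prop :=
  G.IsWalk W ∧ W ≠ [] ∧ G.src W = G.dst W ∧ ∀ e : E, e ∈ W

/-- `W'` occurs as a cyclic (wrap-around) subwalk of the closed walk `W`. -/
def IsCyclicSubwalk (W' W : List E) : Prop :=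
  ∃ i : ℕ, ∀ k : ℕ, k < W'.length → W'[k]? = W[(i + k) % W.length]?

/-- The graph consists of a single closed path through all nodes and arcs. -/
def IsClosedPathGraph : Prop :=
  ∃ C : List E, G.IsPath C ∧ C ≠ [] ∧ G.src C = G.dst C ∧ C.Nodup ∧
    (∀ e : E, e ∈ C) ∧ (∀ v : V, v ∈ G.nodes C)

/-- Compressed graph: no biunivocal nodes and no biunivocal arcs. -/
def Compressed : Prop :=
  (∀ v : V, 1 < G.inDeg v ∨ 1 < G.outDeg v) ∧
  (∀ e : E, G.JoinArc e ∨ G.SplitArc e)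

/-- `u` reaches `v` by a (possibly empty) path avoiding the arc `f`. -/
def ReachesAvoid (f : E) (u v : V) : Prop :=
  u = v ∨ ∃ P, G.IsPath P ∧ f ∉ P ∧ G.src P = some u ∧ G.dst P = some v

/-- A maximal omnitig: an omnitig extendable neither to the left nor to the right. -/
def IsMaximalOmnitig (W : List E) : Prop :=
  G.IsOmnitig W ∧ (∀ e : E, ¬ G.IsOmnitig (e :: W)) ∧ (∀ e : E, ¬ G.IsOmnitig (W ++ [e]))

/-- The reverse graph. -/
def rev : MultiDigraph V E := ⟨G.head, G.tail⟩

/-- Nodes reachable from `v` by a join-free path. -/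
def Rplus (v : V) : Set V :=
  {u | u = v ∨ ∃ W, G.IsPath W ∧ G.JoinFree W ∧ G.src W = some v ∧ G.dst W = some u}

/-- Nodes reaching `v` by a split-free path. -/
def Rminus (v : V) : Set V :=
  {u | u = v ∨ ∃ W, G.IsPath W ∧ G.SplitFree W ∧ G.src W = some u ∧ G.dst W = some v}

/-- The node set of the macronode centered at `v`. -/
def macronodeSet (v : V) : Set V := G.Rplus v ∪ G.Rminus v

/-- The graph obtained from `G` by contracting the arc `e`. -/
def contract [DecidableEq V] (e : E) : MultiDigraph V {a : E // a ≠ e} where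
  tail a := if G.tail a.1 = G.head e then G.tail e else G.tail a.1
  head a := if G.head a.1 = G.head e then G.tail e else G.head a.1

end MultiDigraph


namespace MultiDigraph

variable {V E : Type} (G : MultiDigraph V E)

-- ===== auxiliary lemmas =====

lemma isWalk_iff_getD (d : E) (W : List E) :
    G.IsWalk W ↔ ∀ i, i + 1 < W.length → G.head (W.getD i d) = G.tail (W.getD (i+1) d) := by
  simp only [IsWalk, List.Chain']
  rw [List.isChain_iff_getElem]
  constructor
  · intro h i hi
    rw [List.getD_eq_getElem _ _ (by omega), List.getD_eq_getElem _ _ hi]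
    exact h i (by omega)
  · intro h i hi
    have := h i (by omega)
    rwa [List.getD_eq_getElem _ _ (by omega), List.getD_eq_getElem _ _ (by omega)] at this

lemma src_eq_getD (d : E) (W : List E) (h : W ≠ []) :
    G.src W = some (G.tail (W.getD 0 d)) := by
  have hl : 0 < W.length := List.length_pos_iff.2 h
  rw [src, List.head?_eq_getElem?, List.getElem?_eq_getElem hl,
    List.getD_eq_getElem _ _ hl]
  rfl

lemma dst_eq_getD (d : E) (W : List E) (h : W ≠ []) :
    G.dst W = some (G.head (W.getD (W.length - 1) d)) := by
  have hl : W.length - 1 < W.length := by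
    have := List.length_pos_iff.2 h; omega
  rw [dst, List.getLast?_eq_getElem?, List.getElem?_eq_getElem hl,
    List.getD_eq_getElem _ _ hl]
  rfl

lemma getD_mem (d : E) (W : List E) {i : ℕ} (h : i < W.length) : W.getD i d ∈ W := by
  rw [List.getD_eq_getElem _ _ h]; exact List.getElem_mem h

lemma exists_arc_head (hG : G.StronglyConnected) (e0 : E) (v : V) :
    ∃ e, G.head e = v := by
  rcases hG (G.head e0) v with h | ⟨W, _, _, hd⟩
  · exact ⟨e0, h⟩
  · obtain ⟨a, _, ha⟩ := Option.map_eq_some_iff.1 hd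
    exact ⟨a, ha⟩

lemma exists_arc_tail (hG : G.StronglyConnected) (e0 : E) (v : V) :
    ∃ e, G.tail e = v := by
  rcases hG v (G.tail e0) with h | ⟨W, _, hs, _⟩
  · exact ⟨e0, h.symm⟩
  · obtain ⟨a, _, ha⟩ := Option.map_eq_some_iff.1 hs
    exact ⟨a, ha⟩

lemma inDeg_pos [Finite E] (v : V) (h : ∃ e, G.head e = v) : 0 < G.inDeg v := by
  obtain ⟨e, he⟩ := h
  have : Nonempty {e : E // G.head e = v} := ⟨⟨e, he⟩⟩
  exact Nat.card_pos

lemma outDeg_pos [Finite E] (v : V) (h : ∃ e, G.tail e = v) : 0 < G.outDeg v := by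
  obtain ⟨e, he⟩ := h
  have : Nonempty {e : E // G.tail e = v} := ⟨⟨e, he⟩⟩
  exact Nat.card_pos

lemma eq_of_inDeg_one {v : V} (h : G.inDeg v = 1) {e e' : E}
    (he : G.head e = v) (he' : G.head e' = v) : e = e' := by
  have hs := (Nat.card_eq_one_iff_unique.1 h).1
  exact congrArg Subtype.val (hs.elim ⟨e, he⟩ ⟨e', he'⟩)

lemma nodes_eq_of_walk (W : List E) (hW : G.IsWalk W) (hne : W ≠ []) (x : V)
    (hx : G.dst W = some x) : G.nodes W = W.map G.tail ++ [x] := by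
  induction W with
  | nil => exact absurd rfl hne
  | cons e W ih =>
    cases W with
    | nil =>
      simp only [nodes, List.map]
      have : G.head e = x := by
        simpa [dst] using hx
      simp [this]
    | cons f W' =>
      have hW' : G.IsWalk (f :: W') := (List.isChain_cons_cons.1 hW).2
      have hef : G.head e = G.tail f := (List.isChain_cons_cons.1 hW).1
      have hx' : G.dst (f :: W') = some x := by
        rw [dst]; rw [dst, List.getLast?_cons_cons] at hx; exact hx
      have := ih hW' (by simp) hx'
      show G.tail e :: (G.head e :: _) = _
      rw [hef]
      have h2 : G.tail f :: List.map G.head (f :: W') = G.nodes (f :: W') := rfl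
      simp only [List.map_cons] at this ⊢
      rw [show (G.tail f :: G.head f :: List.map G.head W' : List V)
        = G.nodes (f :: W') from rfl, this]
      simp


-- ===== reversal lemmas =====

lemma rev_head : G.rev.head = G.tail := rfl
lemma rev_tail : G.rev.tail = G.head := rfl

lemma rev_inDeg (v : V) : G.rev.inDeg v = G.outDeg v := rfl
lemma rev_outDeg (v : V) : G.rev.outDeg v = G.inDeg v := rfl

lemma rev_isWalk (W : List E) : G.rev.IsWalk W ↔ G.IsWalk W.reverse := by
  simp only [IsWalk, List.Chain']
  rw [List.isChain_reverse]
  constructor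
  · intro h; exact h.imp fun a b hab => hab.symm
  · intro h; exact h.imp fun a b hab => hab.symm

lemma rev_src (W : List E) : G.rev.src W = G.dst W.reverse := by
  rw [src, dst, List.getLast?_reverse]; rfl

lemma rev_dst (W : List E) : G.rev.dst W = G.src W.reverse := by
  rw [dst, src, List.head?_reverse]; rfl

lemma rev_nodes (W : List E) (hW : G.IsWalk W) :
    G.rev.nodes W.reverse = (G.nodes W).reverse := by
  cases W with
  | nil => rfl
  | cons e W' =>
    have hrw : G.rev.IsWalk (e :: W').reverse := (G.rev_isWalk _).2 (by
      rwa [List.reverse_reverse])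
    have hrne : (e :: W').reverse ≠ [] := by simp
    have hrdst : G.rev.dst (e :: W').reverse = some (G.tail e) := by
      rw [G.rev_dst, List.reverse_reverse]
      rfl
    rw [G.rev.nodes_eq_of_walk _ hrw hrne _ hrdst]
    have hform : G.nodes (e :: W') = G.tail e :: List.map G.head (e :: W') := rfl
    rw [hform]
    simp [rev_tail, List.map_reverse]

lemma rev_isPath (W : List E) : G.rev.IsPath W.reverse ↔ G.IsPath W := by
  constructor
  · rintro ⟨hw, h1, h2⟩
    have hw' : G.IsWalk W := by
      have := (G.rev_isWalk W.reverse).1 hw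
      rwa [List.reverse_reverse] at this
    refine ⟨hw', ?_, ?_⟩
    · rw [G.rev_nodes W hw', List.tail_reverse, List.nodup_reverse] at h2
      exact h2
    · rw [G.rev_nodes W hw', List.dropLast_reverse, List.nodup_reverse] at h1
      exact h1
  · rintro ⟨hw, h1, h2⟩
    refine ⟨(G.rev_isWalk _).2 (by rwa [List.reverse_reverse]), ?_, ?_⟩
    · rw [G.rev_nodes W hw, List.dropLast_reverse, List.nodup_reverse]
      exact h2
    · rw [G.rev_nodes W hw, List.tail_reverse, List.nodup_reverse]
      exact h1


lemma rev_Rplus (v : V) : G.rev.Rplus v = G.Rminus v := by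
  ext u
  simp only [Rplus, Rminus, Set.mem_setOf_eq]
  constructor
  · rintro (rfl | ⟨W, hp, hjf, hs, hd⟩)
    · exact Or.inl rfl
    · refine Or.inr ⟨W.reverse, ?_, ?_, ?_, ?_⟩
      · have : G.rev.IsPath W.reverse.reverse ↔ G.IsPath W.reverse :=
          G.rev_isPath W.reverse
        rw [List.reverse_reverse] at this
        exact this.1 hp
      · intro e he
        rw [List.mem_reverse] at he
        exact hjf e he
      · rw [← G.rev_dst]; exact hd
      · rw [← G.rev_src]; exact hs
  · rintro (rfl | ⟨W, hp, hsf, hs, hd⟩)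
    · exact Or.inl rfl
    · refine Or.inr ⟨W.reverse, (G.rev_isPath W).2 hp, ?_, ?_, ?_⟩
      · intro e he
        rw [List.mem_reverse] at he
        exact hsf e he
      · rw [G.rev_src]; rwa [List.reverse_reverse]
      · rw [G.rev_dst]; rwa [List.reverse_reverse]

lemma rev_Rminus (v : V) : G.rev.Rminus v = G.Rplus v := by
  ext u
  simp only [Rplus, Rminus, Set.mem_setOf_eq]
  constructor
  · rintro (rfl | ⟨W, hp, hsf, hs, hd⟩)
    · exact Or.inl rfl
    · refine Or.inr ⟨W.reverse, ?_, ?_, ?_, ?_⟩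
      · have : G.rev.IsPath W.reverse.reverse ↔ G.IsPath W.reverse :=
          G.rev_isPath W.reverse
        rw [List.reverse_reverse] at this
        exact this.1 hp
      · intro e he
        rw [List.mem_reverse] at he
        exact hsf e he
      · rw [← G.rev_dst]; exact hd
      · rw [← G.rev_src]; exact hs
  · rintro (rfl | ⟨W, hp, hjf, hs, hd⟩)
    · exact Or.inl rfl
    · refine Or.inr ⟨W.reverse, (G.rev_isPath W).2 hp, ?_, ?_, ?_⟩
      · intro e he
        rw [List.mem_reverse] at he
        exact hjf e he
      · rw [G.rev_src]; rwa [List.reverse_reverse]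
      · rw [G.rev_dst]; rwa [List.reverse_reverse]

lemma rev_macronodeSet (v : V) : G.rev.macronodeSet v = G.macronodeSet v := by
  rw [macronodeSet, macronodeSet, rev_Rplus, rev_Rminus, Set.union_comm]

lemma rev_bivalent (v : V) : G.rev.Bivalent v ↔ G.Bivalent v := by
  rw [Bivalent, Bivalent, rev_inDeg, rev_outDeg, and_comm]

lemma rev_stronglyConnected (hG : G.StronglyConnected) : G.rev.StronglyConnected := by
  intro u v
  rcases hG v u with h | ⟨W, hw, hs, hd⟩
  · exact Or.inl h.symm
  · refine Or.inr ⟨W.reverse, (G.rev_isWalk _).2 (by rwa [List.reverse_reverse]), ?_, ?_⟩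
    · rw [G.rev_src]; rwa [List.reverse_reverse]
    · rw [G.rev_dst]; rwa [List.reverse_reverse]

lemma rev_compressed (hc : G.Compressed) : G.rev.Compressed := by
  constructor
  · intro v
    rw [rev_inDeg, rev_outDeg]
    exact (hc.1 v).symm
  · intro e
    rcases hc.2 e with h | h
    · exact Or.inr h
    · exact Or.inl h


-- ===== bivalent case =====

lemma main_biv [Finite E] (u : V) (hb : G.Bivalent u) :
    ∃! v : V, G.Bivalent v ∧ u ∈ G.macronodeSet v := by
  refine ⟨u, ⟨hb, Or.inl (Or.inl rfl)⟩, ?_⟩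
  rintro v ⟨hbv, hmem⟩
  rcases hmem with (h | ⟨W, hp, hjf, hs, hd⟩) | (h | ⟨W, hp, hsf, hs, hd⟩)
  · exact h.symm
  · exfalso
    obtain ⟨a, ha1, ha2⟩ := Option.map_eq_some_iff.1 hd
    have hmem' : a ∈ W := List.mem_of_mem_getLast? ha1
    have := hjf a hmem'
    rw [JoinArc, ha2] at this
    exact this hb.1
  · exact h.symm
  · exfalso
    obtain ⟨a, ha1, ha2⟩ := Option.map_eq_some_iff.1 hs
    have hmem' : a ∈ W := List.mem_of_mem_head? ha1
    have := hsf a hmem'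
    rw [SplitArc, ha2] at this
    exact this hb.2

-- ===== the main lemma =====

lemma main [Fintype V] [Fintype E] (hG : G.StronglyConnected) (hc : G.Compressed)
    (u : V) (hu : G.inDeg u = 1) :
    ∃! v : V, G.Bivalent v ∧ u ∈ G.macronodeSet v := by
  classical
  have hou : 1 < G.outDeg u := by
    rcases hc.1 u with h | h
    · omega
    · exact h
  have hEne : Nonempty E := by
    have h1 : 0 < Nat.card {e : E // G.tail e = u} := by
      have : 1 < Nat.card {e : E // G.tail e = u} := hou
      omega
    obtain ⟨⟨⟨e, _⟩⟩, _⟩ := Nat.card_pos_iff.1 h1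
    exact ⟨e⟩
  obtain ⟨e0⟩ := hEne
  have hhead : ∀ v : V, ∃ e, G.head e = v := G.exists_arc_head hG e0
  have hpos : ∀ v : V, 0 < G.inDeg v := fun v => G.inDeg_pos v (hhead v)
  let f : V → V := fun v => G.tail (hhead v).choose
  have hfhead : ∀ v, G.head (hhead v).choose = v := fun v => (hhead v).choose_spec
  let g : ℕ → V := fun n => f^[n] u
  have hg0 : g 0 = u := rfl
  have hgs : ∀ n, g (n + 1) = G.tail (hhead (g n)).choose := by
    intro n
    show f^[n + 1] u = _
    rw [Function.iterate_succ_apply']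
  have hadd : ∀ a b, g (a + b) = f^[a] (g b) := fun a b =>
    Function.iterate_add_apply f a b u
  have harc : ∀ v, G.inDeg v = 1 → ∀ e, G.head e = v → e = (hhead v).choose :=
    fun v hv e he => G.eq_of_inDeg_one hv he (hfhead v)
  by_cases hex : ∃ n, 1 < G.inDeg (g n)
  · -- there is a bivalent node on the backward chain
    set k := Nat.find hex with hkdef
    have hk : 1 < G.inDeg (g k) := Nat.find_spec hex
    have hlt : ∀ m, m < k → G.inDeg (g m) = 1 := by
      intro m hm
      have h1 := Nat.find_min hex hm
      have h2 := hpos (g m)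
      omega
    have hk1 : 1 ≤ k := by
      by_contra h
      have hk0 : k = 0 := by omega
      rw [hk0, hg0, hu] at hk
      omega
    have hsplit : ∀ i, i < k → 1 < G.outDeg (g (i + 1)) := by
      intro i hi
      have hnj : ¬ G.JoinArc ((hhead (g i)).choose) := by
        rw [JoinArc, hfhead, hlt i hi]
        omega
      rcases hc.2 ((hhead (g i)).choose) with h | h
      · exact absurd h hnj
      · rw [SplitArc] at h
        rwa [← hgs] at h
    have hbivk : G.Bivalent (g k) := by
      refine ⟨hk, ?_⟩
      have := hsplit (k - 1) (by omega)
      rwa [Nat.sub_add_cancel hk1] at this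
    have hginj : ∀ i j, i < j → j ≤ k → g i ≠ g j := by
      intro i j hij hjk heq
      have hper : ∀ n, i ≤ n → g (n + (j - i)) = g n := by
        intro n hn
        have h1 : g (i + (j - i)) = g i := by
          rw [Nat.add_sub_cancel' (le_of_lt hij)]
          exact heq.symm
        have h2 : n + (j - i) = (n - i) + (i + (j - i)) := by omega
        rw [h2, hadd, h1, ← hadd, Nat.sub_add_cancel hn]
      have hperq : ∀ q r, g (i + q * (j - i) + r) = g (i + r) := by
        intro q r
        induction q with
        | zero => simp
        | succ q ih =>
          have h3 : i + (q + 1) * (j - i) + r = (i + q * (j - i) + r) + (j - i) := by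
            ring
          rw [h3, hper _ (by omega), ih]
      have hp : 0 < j - i := by omega
      obtain ⟨q, r, hr, hkeq⟩ : ∃ q r, r < j - i ∧ k = i + q * (j - i) + r := by
        refine ⟨(k - i) / (j - i), (k - i) % (j - i), Nat.mod_lt _ hp, ?_⟩
        have h2 := Nat.div_add_mod (k - i) (j - i)
        rw [Nat.mul_comm] at h2
        omega
      have hone : G.inDeg (g k) = 1 := by
        rw [hkeq, hperq q r]
        exact hlt (i + r) (by omega)
      omega
    -- construct the path P
    set P : List E := (List.range k).map (fun i => (hhead (g (k - 1 - i))).choose)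
      with hP
    have hPlen : P.length = k := by simp [hP]
    have hPget : ∀ j, j < k → P.getD j e0 = (hhead (g (k - 1 - j))).choose := by
      intro j hj
      rw [List.getD_eq_getElem _ _ (by rw [hPlen]; exact hj)]
      simp [hP]
    have hPwalk : G.IsWalk P := by
      rw [G.isWalk_iff_getD e0]
      intro i hi
      rw [hPlen] at hi
      rw [hPget i (by omega), hPget (i + 1) hi, hfhead, ← hgs (k - 1 - (i + 1))]
      congr 1
      omega
    have hPne : P ≠ [] := by
      intro h
      rw [h] at hPlen
      simp at hPlen
      omega
    have hsrcP : G.src P = some (g k) := by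
      rw [G.src_eq_getD e0 P hPne, hPget 0 (by omega)]
      have := hgs (k - 1)
      rw [Nat.sub_add_cancel hk1] at this
      rw [Nat.sub_zero, ← this]
    have hdstP : G.dst P = some u := by
      rw [G.dst_eq_getD e0 P hPne, hPlen, hPget (k - 1) (by omega)]
      rw [show k - 1 - (k - 1) = 0 from by omega, hfhead, hg0]
    have hjfP : G.JoinFree P := by
      intro e he
      rw [hP, List.mem_map] at he
      obtain ⟨i, hi, rfl⟩ := he
      rw [List.mem_range] at hi
      intro hj
      rw [JoinArc, hfhead, hlt (k - 1 - i) (by omega)] at hj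
      omega
    have hnodes : G.nodes P = (List.range (k + 1)).map (fun i => g (k - i)) := by
      rw [G.nodes_eq_of_walk P hPwalk hPne u hdstP]
      rw [List.range_succ, List.map_append]
      congr 1
      · rw [hP, List.map_map]
        apply List.map_congr_left
        intro i hi
        rw [List.mem_range] at hi
        show G.tail (hhead (g (k - 1 - i))).choose = g (k - i)
        rw [← hgs (k - 1 - i)]
        congr 1
        omega
      · show [u] = [g (k - k)]
        rw [Nat.sub_self, hg0]
    have hnodesnd : (G.nodes P).Nodup := by
      rw [hnodes]
      refine List.Nodup.map_on ?_ ((List.nodup_range (n := k + 1)))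
      intro i hi i' hi' hgeq
      rw [List.mem_range] at hi hi'
      by_contra hne
      rcases Nat.lt_or_ge (k - i) (k - i') with h | h
      · exact hginj _ _ h (by omega) hgeq
      · rcases Nat.lt_or_ge (k - i') (k - i) with h2 | h2
        · exact hginj _ _ h2 (by omega) hgeq.symm
        · exact hne (by omega)
    have hPpath : G.IsPath P :=
      ⟨hPwalk, (List.dropLast_sublist _).nodup hnodesnd,
        (List.tail_sublist _).nodup hnodesnd⟩
    refine ⟨g k, ⟨hbivk, Or.inl (Or.inr ⟨P, hPpath, hjfP, hsrcP, hdstP⟩)⟩, ?_⟩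
    -- uniqueness
    rintro v ⟨hbv, hmem⟩
    rcases hmem with (h | ⟨W, hWp, hWjf, hWs, hWd⟩) | (h | ⟨W, hWp, hWsf, hWs, hWd⟩)
    · -- u = v, v bivalent: impossible
      exfalso
      have h1 := hbv.1
      rw [← h, hu] at h1
      omega
    · -- join-free path from v to u: trace it backwards
      set m := W.length with hm
      have hWne : W ≠ [] := by
        intro hnil
        rw [hnil] at hWs
        simp [src] at hWs
      have hm1 : 1 ≤ m := by
        have := List.length_pos_iff.2 hWne
        omega
      have hchain := (G.isWalk_iff_getD e0 W).1 hWp.1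
      have hkey : ∀ i, i < m → G.head (W.getD (m - 1 - i) e0) = g i := by
        intro i
        induction i with
        | zero =>
          intro _
          have h5 := G.dst_eq_getD e0 W hWne
          rw [hWd, ← hm] at h5
          rw [Nat.sub_zero, hg0]
          exact (Option.some.inj h5).symm
        | succ i ih =>
          intro hi
          have h1 := ih (by omega)
          have hdeg : G.inDeg (g i) = 1 := by
            have hmm := hWjf _ (MultiDigraph.getD_mem e0 W (show m - 1 - i < W.length by omega))
            rw [JoinArc, h1] at hmm
            have := hpos (g i)
            omega
          have harc' : W.getD (m - 1 - i) e0 = (hhead (g i)).choose :=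
            harc _ hdeg _ h1
          have htail : G.tail (W.getD (m - 1 - i) e0) = g (i + 1) := by
            rw [harc', ← hgs]
          have hc2 := hchain (m - 1 - (i + 1)) (by omega)
          rw [show m - 1 - (i + 1) + 1 = m - 1 - i from by omega] at hc2
          rw [hc2, htail]
      have hdeg : ∀ i, i < m → G.inDeg (g i) = 1 := by
        intro i hi
        have hmm := hWjf _ (MultiDigraph.getD_mem e0 W (show m - 1 - i < W.length by omega))
        rw [JoinArc, hkey i hi] at hmm
        have := hpos (g i)
        omega
      have hv : v = g m := by
        have h0 : G.head (W.getD 0 e0) = g (m - 1) := by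
          have := hkey (m - 1) (by omega)
          rwa [show m - 1 - (m - 1) = 0 from by omega] at this
        have h1 : W.getD 0 e0 = (hhead (g (m - 1))).choose :=
          harc _ (hdeg (m - 1) (by omega)) _ h0
        have h2 : G.tail (W.getD 0 e0) = g m := by
          rw [h1, ← hgs, Nat.sub_add_cancel hm1]
        have h3 := G.src_eq_getD e0 W hWne
        rw [hWs, h2] at h3
        exact Option.some.inj h3
      have hmk : m = k := by
        have h1 : k ≤ m := by
          apply Nat.find_le
          rw [← hv]
          exact hbv.1
        by_contra hne
        have h2 : k < m := by omega
        have := hdeg k h2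
        omega
      rw [hv, hmk]
    · exfalso
      have h1 := hbv.1
      rw [← h, hu] at h1
      omega
    · -- split-free path from u: impossible since outDeg u > 1
      exfalso
      have hWne : W ≠ [] := by
        intro hnil
        rw [hnil] at hWs
        simp [src] at hWs
      have h3 := G.src_eq_getD e0 W hWne
      rw [hWs] at h3
      have h4 : G.tail (W.getD 0 e0) = u := (Option.some.inj h3).symm
      have hmm := hWsf _ (MultiDigraph.getD_mem e0 W (List.length_pos_iff.2 hWne))
      rw [SplitArc, h4] at hmm
      exact hmm hou
  · -- no bivalent node on the chain: contradiction
    exfalso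
    push_neg at hex
    have hall : ∀ n, G.inDeg (g n) = 1 := by
      intro n
      have h1 := hex n
      have h2 := hpos (g n)
      omega
    have hclose : ∀ W : List E, G.IsWalk W → ∀ n y, G.dst W = some (g n) →
        G.src W = some y → y ∈ Set.range g := by
      intro W
      induction W using List.reverseRecOn with
      | nil =>
        intro _ n y hd
        simp [dst] at hd
      | append_singleton W a ih =>
        intro hW n y hd hs
        have hda : G.head a = g n := by
          have : G.dst (W ++ [a]) = some (G.head a) := by
            rw [dst, List.getLast?_concat]
            rfl
          rw [this] at hd
          exact Option.some.inj hd
        have ha : a = (hhead (g n)).choose := harc _ (hall n) _ hda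
        have hta : G.tail a = g (n + 1) := by rw [ha, ← hgs]
        cases W with
        | nil =>
          have : y = G.tail a := by
            rw [src] at hs
            simpa using hs.symm
          exact ⟨n + 1, by rw [← hta, this]⟩
        | cons b W' =>
          have hsplit := List.isChain_append.1 hW
          have hW' : G.IsWalk (b :: W') := hsplit.1
          have hlast : G.head ((b :: W').getLast (by simp)) = G.tail a := by
            apply hsplit.2.2
            · rw [List.getLast?_eq_getLast (by simp)]
              rfl
            · rfl
          have hdW' : G.dst (b :: W') = some (g (n + 1)) := by
            rw [dst, List.getLast?_eq_getLast (by simp), Option.map_some]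
            rw [hlast, hta]
          have hsW' : G.src (b :: W') = some y := by
            rw [src] at hs ⊢
            simpa using hs
          exact ih hW' (n + 1) y hdW' hsW'
    have hrange : ∀ y : V, y ∈ Set.range g := by
      intro y
      rcases hG y u with rfl | ⟨W, hW, hs, hd⟩
      · exact ⟨0, rfl⟩
      · exact hclose W hW 0 y (by rwa [hg0]) hs
    have hin1 : ∀ v : V, G.inDeg v = 1 := by
      intro v
      obtain ⟨n, rfl⟩ := hrange v
      exact hall n
    have hout2 : ∀ v : V, 2 ≤ G.outDeg v := by
      intro v
      rcases hc.1 v with h | h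
      · rw [hin1 v] at h; omega
      · omega
    have hinj : Function.Injective G.head := by
      intro e e' h
      rw [harc _ (hin1 (G.head e)) e rfl, harc _ (hin1 (G.head e)) e' h.symm]
    have hcard1 : Fintype.card E ≤ Fintype.card V := Fintype.card_le_of_injective _ hinj
    have hodeg : ∀ v : V, G.outDeg v = (Finset.univ.filter fun e => G.tail e = v).card := by
      intro v
      rw [outDeg, Nat.card_eq_fintype_card, Fintype.card_subtype]
    have hcard2 : Fintype.card E = ∑ v : V, (Finset.univ.filter fun e => G.tail e = v).card := by
      rw [← Finset.card_univ,
        Finset.card_eq_sum_card_fiberwise (fun x _ => Finset.mem_univ (G.tail x))]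
    have hsum : 2 * Fintype.card V ≤ ∑ v : V, (Finset.univ.filter fun e => G.tail e = v).card := by
      calc 2 * Fintype.card V = ∑ _v : V, 2 := by
            rw [Finset.sum_const, Finset.card_univ, smul_eq_mul, Nat.mul_comm]
        _ ≤ _ := Finset.sum_le_sum fun v _ => by rw [← hodeg v]; exact hout2 v
    have hVpos : 0 < Fintype.card V := Fintype.card_pos_iff.2 ⟨u⟩
    omega


end MultiDigraph

open MultiDigraph in
theorem stmt_16' {V E : Type} [Fintype V] [Fintype E]
    (G : MultiDigraph V E) (hG : G.StronglyConnected)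
    (hc : G.Compressed) :
    ∀ u : V, ∃! v : V, G.Bivalent v ∧ u ∈ G.macronodeSet v := by
  intro u
  classical
  by_cases h1 : 1 < G.inDeg u
  · by_cases h2 : 1 < G.outDeg u
    · exact G.main_biv u ⟨h1, h2⟩
    · have hE : Nonempty E := by
        have hp : 0 < Nat.card {e : E // G.head e = u} := by
          have : 1 < Nat.card {e : E // G.head e = u} := h1
          omega
        obtain ⟨⟨⟨e, _⟩⟩, _⟩ := Nat.card_pos_iff.1 hp
        exact ⟨e⟩
      obtain ⟨e0⟩ := hE
      have hout1 : G.outDeg u = 1 := by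
        have := G.outDeg_pos u (G.exists_arc_tail hG e0 u)
        omega
      have h := G.rev.main (G.rev_stronglyConnected hG) (G.rev_compressed hc) u
        (by rw [rev_inDeg]; exact hout1)
      obtain ⟨v, ⟨hb, hm⟩, huniq⟩ := h
      refine ⟨v, ⟨(G.rev_bivalent v).1 hb, ?_⟩, ?_⟩
      · rw [← G.rev_macronodeSet]; exact hm
      · rintro y ⟨hby, hmy⟩
        exact huniq y ⟨(G.rev_bivalent y).2 hby,
          by rw [G.rev_macronodeSet]; exact hmy⟩
  · have hE : Nonempty E := by
      rcases hc.1 u with h | h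
      · exact absurd h h1
      · have hp : 0 < Nat.card {e : E // G.tail e = u} := by
          have : 1 < Nat.card {e : E // G.tail e = u} := h
          omega
        obtain ⟨⟨⟨e, _⟩⟩, _⟩ := Nat.card_pos_iff.1 hp
        exact ⟨e⟩
    obtain ⟨e0⟩ := hE
    have hin1 : G.inDeg u = 1 := by
      have := G.inDeg_pos u (G.exists_arc_head hG e0 u)
      omega
    exact G.main hG hc u hin1



/-- Macronode partition: in a compressed strongly connected graph
(not a closed path), every node belongs to the macronode of exactly one bivalent
node. -/
theorem stmt_16 {V E : Type} [Fintype V] [Fintype E]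
    (G : MultiDigraph V E) (hG : G.StronglyConnected)
    (hc : G.Compressed) (hnp : ¬ G.IsClosedPathGraph) :
    ∀ u : V, ∃! v : V, G.Bivalent v ∧ u ∈ G.macronodeSet v := by
  intro u
  exact stmt_16' G hG hc u
end

section
/- In a compressed strongly connected graph, if fWg is a walk where f is a join arc and g is a split arc, then W contains an internal node that is bivalent; and if gWf is a walk where g is a split arc and f is a join arc, then gWf contains a bivalent arc. -/
private lemma chain_all_aux {α : Type} {R : α → α → Prop} {P : α → Prop} :
    ∀ (L : List α) (e : α), List.Chain' R (e :: L) → P e →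
      (∀ a b, a ∈ e :: L → b ∈ e :: L → R a b → P a → P b) →
      ∀ x ∈ e :: L, P x := by
  intro L
  induction L with
  | nil =>
    intro e _ hp _ x hx
    simp only [List.mem_singleton] at hx
    subst hx; exact hp
  | cons a L ih =>
    intro e hch hp hstep x hx
    unfold List.Chain' at hch; rw [List.isChain_cons_cons] at hch
    have hpa : P a := hstep e a (by simp) (by simp) hch.1 hp
    rcases List.mem_cons.1 hx with h | h
    · subst h; exact hp
    · exact ih a hch.2 hpa
        (fun u v hu hv => hstep u v (List.mem_cons_of_mem _ hu) (List.mem_cons_of_mem _ hv)) x h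

/-- in a compressed strongly connected graph, a walk `fWg` with `f`
join and `g` split has an internal bivalent node, and a walk `gWf` with `g` split
and `f` join contains a bivalent arc. -/
theorem stmt_17 {V E : Type} [Fintype V] [Fintype E]
    (G : MultiDigraph V E) (hG : G.StronglyConnected) (hc : G.Compressed) :
    (∀ (f : E) (W : List E) (g : E), G.JoinArc f → G.SplitArc g →
      G.IsWalk (f :: (W ++ [g])) →
      ∃ v ∈ ((G.nodes (f :: (W ++ [g]))).drop 1).dropLast, G.Bivalent v) ∧
    (∀ (g : E) (W : List E) (f : E), G.SplitArc g → G.JoinArc f →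
      G.IsWalk (g :: (W ++ [f])) →
      ∃ e ∈ g :: (W ++ [f]), G.JoinArc e ∧ G.SplitArc e) := by
  constructor
  · intro f W g hf hg hw
    by_contra hno
    push_neg at hno
    have hnobiv : ∀ e ∈ f :: W, ¬ G.Bivalent (G.head e) := by
      intro e he
      apply hno
      have : ((G.nodes (f :: (W ++ [g]))).drop 1).dropLast
          = (f :: W).map G.head := by
        show (((f :: (W ++ [g])).map G.head)).dropLast = _
        rw [show f :: (W ++ [g]) = (f :: W) ++ [g] by simp]
        rw [List.map_append]
        simp only [List.map_cons, List.map_nil, List.cons_append, List.nil_append]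
        rw [show G.head f :: (List.map G.head W ++ [G.head g])
            = (G.head f :: List.map G.head W) ++ [G.head g] by simp,
          List.dropLast_concat]
      rw [this]
      exact List.mem_map_of_mem he
    have hw' : List.Chain' (fun a b => G.head a = G.tail b) ((f :: W) ++ [g]) := by
      simpa [MultiDigraph.IsWalk] using hw
    unfold List.Chain' at hw'; rw [List.isChain_append] at hw'
    obtain ⟨h1, _, hlink⟩ := hw'
    -- every arc in f :: W is a join arc
    have hall : ∀ x ∈ f :: W, G.JoinArc x := by
      refine chain_all_aux W f h1 hf ?_
      intro a b ha _ hr hpa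
      have hnb := hnobiv a ha
      rcases hc.2 b with hj | hs
      · exact hj
      · exfalso
        exact hnb ⟨hpa, by rwa [hr]⟩
    set e := (f :: W).getLast (by simp) with he
    have hem : e ∈ f :: W := List.getLast_mem _
    have hej : G.JoinArc e := hall e hem
    have hlink' : G.head e = G.tail g := by
      apply hlink e _ g (by simp)
      rw [List.getLast?_eq_getLast (by simp)]
      exact Option.mem_some_iff.2 he.symm
    exact hnobiv e hem ⟨hej, by rw [hlink']; exact hg⟩
  · intro g W f hg hf hw
    by_contra hno
    push_neg at hno
    have hw' : List.Chain' (fun a b => G.head a = G.tail b) (g :: (W ++ [f])) := hw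
    have hall : ∀ x ∈ g :: (W ++ [f]), G.SplitArc x := by
      refine chain_all_aux _ g hw' hg ?_
      intro a b ha _ hr hpa
      have hna := hno a ha
      have : ¬ G.JoinArc a := fun h => hna h hpa
      rcases hc.1 (G.head a) with h | h
      · exact absurd h this
      · exact (by rwa [hr] at h : 1 < G.outDeg (G.tail b))
    have hfm : f ∈ g :: (W ++ [f]) := by simp
    exact hno f hfm hf (hall f hfm)
end

section
/- Let e be a join-free arc of a strongly connected graph G, and let c_e(G) be the graph obtained by contracting e. A walk W' of c_e(G) is an omnitig of c_e(G) if and only if there exists an omnitig W of G such that W' is obtained from W by deleting every occurrence of e. -/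
namespace StmtAux
open List

variable {V E : Type}

theorem MultiDigraph.isPath_iff (H : MultiDigraph V E) (W : List E) :
    H.IsPath W ↔ H.IsWalk W ∧ (W.map H.head).Nodup ∧
      ∀ f, W.head? = some f → H.tail f ∉ (W.dropLast.map H.head) := by
  cases W with
  | nil => simp [MultiDigraph.IsPath, MultiDigraph.nodes]
  | cons a W =>
    show H.IsWalk _ ∧ (H.nodes _).dropLast.Nodup ∧ (H.nodes _).tail.Nodup ↔ _
    have h1 : ((a :: W).map H.head) ≠ [] := by simp
    rw [show H.nodes (a :: W) = H.tail a :: (a :: W).map H.head from rfl,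
      List.dropLast_cons_of_ne_nil h1]
    simp only [List.tail_cons, List.nodup_cons, List.head?_cons]
    constructor
    · rintro ⟨hw, ⟨hni, _⟩, hnd2⟩
      refine ⟨hw, hnd2, ?_⟩
      rintro f hf
      obtain rfl : a = f := by injection hf
      rw [List.map_dropLast]
      exact hni
    · rintro ⟨hw, hnd, hcond⟩
      refine ⟨hw, ⟨?_, hnd.sublist (List.dropLast_sublist _)⟩, hnd⟩
      rw [List.map_dropLast] at hcond
      exact hcond a rfl

theorem mem_map_dropLast_iff {α β : Type*} (f : α → β) {P : List α}
    (hnd : (P.map f).Nodup) (hP : P ≠ []) {x : β} :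
    x ∈ P.dropLast.map f ↔ x ∈ P.map f ∧ some x ≠ P.getLast?.map f := by
  have hdec : P.dropLast ++ [P.getLast hP] = P := List.dropLast_append_getLast hP
  have hmap : P.map f = P.dropLast.map f ++ [f (P.getLast hP)] := by
    conv_lhs => rw [← hdec]
    simp
  have hgl : P.getLast?.map f = some (f (P.getLast hP)) := by
    rw [List.getLast?_eq_getLast hP]; rfl
  rw [hmap] at hnd
  rw [hgl, hmap]
  obtain ⟨-, -, hdisj⟩ := List.nodup_append.mp hnd
  constructor
  · intro hx
    refine ⟨List.mem_append_left _ hx, ?_⟩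
    simp only [ne_eq, Option.some.injEq]
    intro hxe
    exact hdisj _ hx _ (List.mem_singleton_self _) hxe
  · rintro ⟨hx, hne⟩
    rcases List.mem_append.mp hx with h | h
    · exact h
    · simp only [List.mem_singleton] at h
      simp [h] at hne

theorem filter_index_of {α : Type*} (p : α → Bool) :
    ∀ (L : List α) (k : ℕ) (hk : k < L.length), p (L[k]'hk) = true →
      ∃ h : (L.take k).countP p < (L.filter p).length,
        (L.filter p)[(L.take k).countP p] = L[k]'hk := by
  intro L
  induction L with
  | nil => intro k hk; simp at hk
  | cons a l ih =>
    intro k hk hp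
    cases k with
    | zero =>
      simp only [List.getElem_cons_zero] at hp ⊢
      rw [List.filter_cons_of_pos hp]
      simp
    | succ k =>
      simp only [List.getElem_cons_succ] at hp ⊢
      obtain ⟨h, he⟩ := ih k (by simpa using Nat.lt_of_succ_lt_succ hk) hp
      rw [List.take_succ_cons, List.countP_cons]
      by_cases hpa : p a = true
      · rw [List.filter_cons_of_pos hpa]
        simp only [hpa, if_pos]
        refine ⟨by simpa using Nat.succ_lt_succ h, ?_⟩
        simpa using he
      · rw [List.filter_cons_of_neg (by simpa using hpa)]
        simp only [hpa, if_neg, Bool.false_eq_true, Nat.add_zero]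
        exact ⟨h, he⟩

theorem countP_take_le {α : Type*} (p : α → Bool) (L : List α) {k k' : ℕ} (h : k ≤ k') :
    (L.take k).countP p ≤ (L.take k').countP p := by
  have : L.take k = (L.take k').take k := by rw [List.take_take, Nat.min_eq_left h]
  rw [this]
  exact (List.take_sublist _ _).countP_le (p := p)

theorem countP_take_succ {α : Type*} (p : α → Bool) (L : List α) {k : ℕ} (hk : k < L.length)
    (hp : p (L[k]'hk) = true) :
    (L.take (k+1)).countP p = (L.take k).countP p + 1 := by
  rw [List.take_succ, List.countP_append]
  have : L[k]? = some (L[k]'hk) := List.getElem?_eq_getElem hk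
  rw [this]
  simp [hp]

theorem countP_take_mono {α : Type*} (p : α → Bool) (L : List α) {k₁ k₂ : ℕ}
    (h12 : k₁ < k₂) (hk : k₁ < L.length) (hp : p (L[k₁]'hk) = true) :
    (L.take k₁).countP p < (L.take k₂).countP p := by
  calc (L.take k₁).countP p < (L.take (k₁+1)).countP p := by
        rw [countP_take_succ p L hk hp]; omega
    _ ≤ (L.take k₂).countP p := countP_take_le p L h12

theorem filter_surj_index {α : Type*} (p : α → Bool) :
    ∀ (L : List α) (m : ℕ), m < (L.filter p).length →
      ∃ (M : ℕ) (hM : M < L.length), p (L[M]'hM) = true ∧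
        (L.take M).countP p = m ∧ (L.filter p)[m]? = some (L[M]'hM) := by
  intro L
  induction L with
  | nil => intro m hm; simp at hm
  | cons a l ih =>
    intro m hm
    by_cases hpa : p a = true
    · rw [List.filter_cons_of_pos hpa] at hm ⊢
      cases m with
      | zero => exact ⟨0, by simp, by simpa using hpa, by simp, by simp⟩
      | succ m =>
        obtain ⟨M, hM, h1, h2, h3⟩ := ih m (by simpa using Nat.lt_of_succ_lt_succ hm)
        refine ⟨M+1, by simpa using Nat.succ_lt_succ hM, by simpa using h1, ?_, by simpa using h3⟩
        rw [List.take_succ_cons, List.countP_cons, h2]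
        simp [hpa]
    · rw [List.filter_cons_of_neg (by simpa using hpa)] at hm ⊢
      obtain ⟨M, hM, h1, h2, h3⟩ := ih m hm
      refine ⟨M+1, by simpa using Nat.succ_lt_succ hM, by simpa using h1, ?_, by simpa using h3⟩
      rw [List.take_succ_cons, List.countP_cons, h2]
      simp [hpa]

end StmtAux
namespace StmtAux
open List MultiDigraph

variable {V E : Type}

theorem suffix_path (H : MultiDigraph V E) {P : List E} (hw : H.IsWalk P)
    (hnd : (P.map H.head).Nodup) {k : ℕ} (hk : k + 1 < P.length) :
    H.IsPath (P.drop (k+1)) ∧ P.drop (k+1) ≠ [] ∧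
      H.src (P.drop (k+1)) = some (H.head (P[k]'(by omega))) ∧
      (P.drop (k+1)).getLast? = P.getLast? := by
  have hlen : (P.drop (k+1)).length = P.length - (k+1) := List.length_drop
  have hnenil : P.drop (k+1) ≠ [] := by
    apply List.ne_nil_of_length_pos; omega
  have hwd : H.IsWalk (P.drop (k+1)) := List.IsChain.drop hw (k+1)
  have hhead : (P.drop (k+1)).head? = some (P[k+1]'hk) := by
    rw [List.head?_drop]; exact List.getElem?_eq_getElem hk
  have hchain : H.head (P[k]'(by omega)) = H.tail (P[k+1]'hk) := by
    have := List.isChain_iff_getElem.mp hw k (by omega)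
    simpa using this
  have hsrc : H.src (P.drop (k+1)) = some (H.head (P[k]'(by omega))) := by
    rw [MultiDigraph.src, hhead, Option.map_some, hchain]
  have hnotmem : H.head (P[k]'(by omega)) ∉ (P.drop (k+1)).map H.head := by
    intro hmem
    rw [List.map_drop] at hmem
    obtain ⟨m, hm, hme⟩ := List.mem_iff_getElem.mp hmem
    rw [List.getElem_drop] at hme
    have hlm : k + 1 + m < (P.map H.head).length := by
      rw [List.length_map]; rw [List.length_drop, List.length_map] at hm; omega
    have hk' : k < (P.map H.head).length := by rw [List.length_map]; omega
    have : (P.map H.head)[k+1+m]'hlm = (P.map H.head)[k]'hk' := by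
      simp only [List.getElem_map] at hme ⊢; exact hme
    have := (hnd.getElem_inj_iff).mp this
    omega
  refine ⟨?_, hnenil, hsrc, ?_⟩
  · rw [MultiDigraph.isPath_iff]
    refine ⟨hwd, ?_, ?_⟩
    · rw [List.map_drop]; exact hnd.sublist (List.drop_sublist _ _)
    · intro f hf
      rw [hhead] at hf
      obtain rfl : P[k+1]'hk = f := by injection hf
      rw [← hchain]
      intro hmem
      exact hnotmem (((P.drop (k+1)).dropLast_sublist.map H.head).mem hmem)
  · rw [List.getLast?_drop, if_neg (by omega)]

section Contract

variable [DecidableEq V] [DecidableEq E] (G : MultiDigraph V E) (e : E)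

/-- Delete every occurrence of `e`, recording membership in the subtype. -/
def proje : List E → List {a : E // a ≠ e}
  | [] => []
  | a :: P => if h : a = e then proje P else ⟨a, h⟩ :: proje P

@[simp] theorem proje_nil : proje e ([] : List E) = [] := rfl

theorem proje_cons_e (P : List E) : proje e (e :: P) = proje e P := by
  simp [proje]

theorem proje_cons_ne (P : List E) {a : E} (ha : a ≠ e) :
    proje e (a :: P) = ⟨a, ha⟩ :: proje e P := by
  simp [proje, ha]

theorem proje_map_val (P : List E) :
    (proje e P).map Subtype.val = P.filter (fun a => a ≠ e) := by
  induction P with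
  | nil => rfl
  | cons a P ih =>
    by_cases ha : a = e
    · subst ha; rw [proje_cons_e, List.filter_cons_of_neg (by simp)]; exact ih
    · rw [proje_cons_ne e P ha, List.filter_cons_of_pos (by simpa using ha)]
      simpa using ih

variable {G e}

/-- head of an arc in the contraction. -/
theorem chead (heq : ∀ a, G.head a = G.head e → a = e) (a : {x : E // x ≠ e}) :
    (G.contract e).head a = G.head a.1 := by
  show (if G.head a.1 = G.head e then G.tail e else G.head a.1) = G.head a.1
  rw [if_neg]
  intro hc
  exact a.2 (heq _ hc)

theorem ctail (a : {x : E // x ≠ e}) :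
    (G.contract e).tail a = if G.tail a.1 = G.head e then G.tail e else G.tail a.1 := rfl

theorem ctail_pos {a : {x : E // x ≠ e}} (h : G.tail a.1 = G.head e) :
    (G.contract e).tail a = G.tail e := by rw [ctail, if_pos h]

theorem ctail_neg {a : {x : E // x ≠ e}} (h : G.tail a.1 ≠ G.head e) :
    (G.contract e).tail a = G.tail a.1 := by rw [ctail, if_neg h]

theorem proje_isWalk (hne : G.tail e ≠ G.head e) (heq : ∀ a, G.head a = G.head e → a = e)
    {P : List E} (hw : G.IsWalk P) : (G.contract e).IsWalk (proje e P) := by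
  induction P with
  | nil => exact List.isChain_nil
  | cons a P ih =>
    have hwP : G.IsWalk P := hw.tail
    by_cases ha : a = e
    · subst ha; rw [proje_cons_e]; exact ih hwP
    · rw [proje_cons_ne e P ha]
      refine List.isChain_cons.mpr ⟨?_, ih hwP⟩
      intro y hy
      cases P with
      | nil => simp at hy
      | cons b P' =>
        have h1 : G.head a = G.tail b := (List.isChain_cons_cons.mp hw).1
        by_cases hb : b = e
        · subst b
          cases P' with
          | nil => rw [proje_cons_e] at hy; simp at hy
          | cons g rest =>
            have h2 : G.head e = G.tail g := (List.isChain_cons_cons.mp hw.tail).1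
            have hg : g ≠ e := by
              intro hge; subst hge; exact hne h2.symm
            rw [proje_cons_e, proje_cons_ne e rest hg] at hy
            simp only [List.head?_cons, Option.mem_def, Option.some.injEq] at hy
            subst hy
            rw [chead heq, ctail_pos (a := ⟨g, hg⟩) h2.symm]
            exact h1.symm ▸ rfl
        · rw [proje_cons_ne e P' hb] at hy
          simp only [List.head?_cons, Option.mem_def, Option.some.injEq] at hy
          subst hy
          rw [chead heq, ctail_neg (a := ⟨b, hb⟩)]
          · exact h1
          · intro hc
            exact ha (heq a (h1.trans hc))

end Contract

end StmtAux
namespace StmtAux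
open List MultiDigraph

section Lifte

variable {V E : Type} [DecidableEq V] [DecidableEq E] (G : MultiDigraph V E) (e : E)

/-- Reinsert `e` whenever consecutive arcs do not chain in `G`. -/
def lifte : List {a : E // a ≠ e} → List E
  | [] => []
  | [a] => [a.1]
  | a :: b :: l =>
    if G.head a.1 = G.tail b.1 then a.1 :: lifte (b :: l) else a.1 :: e :: lifte (b :: l)

@[simp] theorem lifte_nil : lifte G e [] = [] := rfl

@[simp] theorem lifte_single (a : {x : E // x ≠ e}) : lifte G e [a] = [a.1] := rfl

theorem lifte_cons_cons (a b : {x : E // x ≠ e}) (l : List {x : E // x ≠ e}) :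
    lifte G e (a :: b :: l) =
      if G.head a.1 = G.tail b.1 then a.1 :: lifte G e (b :: l)
      else a.1 :: e :: lifte G e (b :: l) := rfl

theorem lifte_ne_nil {L : List {x : E // x ≠ e}} (hL : L ≠ []) : lifte G e L ≠ [] := by
  cases L with
  | nil => exact absurd rfl hL
  | cons a L =>
    cases L with
    | nil => simp
    | cons b l =>
      rw [lifte_cons_cons]
      split <;> simp

theorem head?_lifte (L : List {x : E // x ≠ e}) :
    (lifte G e L).head? = L.head?.map Subtype.val := by
  cases L with
  | nil => rfl
  | cons a L =>
    cases L with
    | nil => rfl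
    | cons b l => rw [lifte_cons_cons]; split <;> rfl

theorem getLast?_lifte (L : List {x : E // x ≠ e}) :
    (lifte G e L).getLast? = L.getLast?.map Subtype.val := by
  induction L with
  | nil => rfl
  | cons a L ih =>
    cases L with
    | nil => rfl
    | cons b l =>
      rw [lifte_cons_cons]
      have hne : lifte G e (b :: l) ≠ [] := lifte_ne_nil G e (by simp)
      obtain ⟨x, L', hxL⟩ : ∃ x L', lifte G e (b :: l) = x :: L' := by
        cases h : lifte G e (b :: l) with
        | nil => exact absurd h hne
        | cons x L' => exact ⟨x, L', rfl⟩
      split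
      · rw [hxL, List.getLast?_cons_cons, ← hxL, ih, List.getLast?_cons_cons]
      · rw [hxL, List.getLast?_cons_cons, List.getLast?_cons_cons, ← hxL, ih,
          List.getLast?_cons_cons]

theorem filter_lifte (L : List {x : E // x ≠ e}) :
    (lifte G e L).filter (fun a => a ≠ e) = L.map Subtype.val := by
  induction L with
  | nil => rfl
  | cons a L ih =>
    cases L with
    | nil => simp [List.filter_cons_of_pos, a.2]
    | cons b l =>
      rw [lifte_cons_cons]
      split
      · rw [List.filter_cons_of_pos (by simpa using a.2), ih]; rfl
      · rw [List.filter_cons_of_pos (by simpa using a.2),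
          List.filter_cons_of_neg (by simp), ih]
        rfl

variable {G e}

theorem cwalk_cases (heq : ∀ a, G.head a = G.head e → a = e)
    {a b : {x : E // x ≠ e}} {l : List {x : E // x ≠ e}}
    (hw : (G.contract e).IsWalk (a :: b :: l)) :
    G.head a.1 = G.tail b.1 ∨ (G.head a.1 = G.tail e ∧ G.tail b.1 = G.head e) := by
  have h1 : (G.contract e).head a = (G.contract e).tail b := (List.isChain_cons_cons.mp hw).1
  rw [chead heq] at h1
  by_cases hb : G.tail b.1 = G.head e
  · right
    rw [ctail_pos hb] at h1
    exact ⟨h1, hb⟩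
  · left
    rw [ctail_neg hb] at h1
    exact h1

theorem lifte_isWalk (hne : G.tail e ≠ G.head e) (heq : ∀ a, G.head a = G.head e → a = e)
    {L : List {x : E // x ≠ e}} (hw : (G.contract e).IsWalk L) :
    G.IsWalk (lifte G e L) := by
  induction L with
  | nil => exact List.isChain_nil
  | cons a L ih =>
    cases L with
    | nil => exact List.isChain_singleton _
    | cons b l =>
      have hwt : (G.contract e).IsWalk (b :: l) := hw.tail
      have hhead : (lifte G e (b :: l)).head? = some b.1 := by
        rw [head?_lifte]; rfl
      rw [lifte_cons_cons]
      rcases cwalk_cases heq hw with h | ⟨h1, h2⟩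
      · rw [if_pos h]
        refine List.isChain_cons.mpr ⟨?_, ih hwt⟩
        intro y hy
        rw [hhead] at hy
        obtain rfl : b.1 = y := by injection hy
        exact h
      · rw [if_neg (fun hc => hne (h1.symm.trans (hc.trans h2)))]
        refine List.isChain_cons_cons.mpr ⟨h1, ?_⟩
        refine List.isChain_cons.mpr ⟨?_, ih hwt⟩
        intro y hy
        rw [hhead] at hy
        obtain rfl : b.1 = y := by injection hy
        exact h2.symm

end Lifte

end StmtAux
namespace StmtAux
open List MultiDigraph

section Lifte2

variable {V E : Type} [DecidableEq V] [DecidableEq E] {G : MultiDigraph V E} {e : E}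

theorem mem_map_head_lifte {x : V} :
    ∀ {L : List {a : E // a ≠ e}}, x ∈ (lifte G e L).map G.head →
      x = G.head e ∨ x ∈ L.map (fun a => G.head a.1) := by
  intro L
  induction L with
  | nil => intro h; simp at h
  | cons a L ih =>
    intro hx
    cases L with
    | nil =>
      simp only [lifte_single, List.map_cons, List.map_nil, List.mem_singleton] at hx
      right; simp [hx]
    | cons b l =>
      rw [lifte_cons_cons] at hx
      have step : x = G.head a.1 ∨ x ∈ (lifte G e (b :: l)).map G.head → _ := id
      by_cases hif : G.head a.1 = G.tail b.1
      · rw [if_pos hif] at hx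
        simp only [List.map_cons, List.mem_cons] at hx
        rcases hx with h | h
        · right; simp [h]
        · rcases ih h with h' | h'
          · exact Or.inl h'
          · right; simp only [List.map_cons, List.mem_cons]
            exact Or.inr (List.mem_cons.mp h')
      · rw [if_neg hif] at hx
        simp only [List.map_cons, List.mem_cons] at hx
        rcases hx with h | h | h
        · right; simp [h]
        · exact Or.inl h
        · rcases ih h with h' | h'
          · exact Or.inl h'
          · right; simp only [List.map_cons, List.mem_cons]
            exact Or.inr (List.mem_cons.mp h')

theorem no_insert (heq : ∀ a, G.head a = G.head e → a = e) :
    ∀ {L : List {a : E // a ≠ e}}, (G.contract e).IsWalk L →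
      (∀ a ∈ L.dropLast, G.head a.1 ≠ G.tail e) →
      G.head e ∉ (lifte G e L).map G.head := by
  intro L
  induction L with
  | nil => intro _ _ h; simp at h
  | cons a L ih =>
    intro hw hd hx
    cases L with
    | nil =>
      simp only [lifte_single, List.map_cons, List.map_nil, List.mem_singleton] at hx
      exact a.2 (heq _ hx.symm)
    | cons b l =>
      have ha : G.head a.1 ≠ G.tail e := hd a (by
        rw [List.dropLast_cons_of_ne_nil (by simp)]; exact List.mem_cons_self)
      rcases cwalk_cases heq hw with h | ⟨h1, h2⟩
      · rw [lifte_cons_cons, if_pos h] at hx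
        simp only [List.map_cons, List.mem_cons] at hx
        rcases hx with h' | h'
        · exact a.2 (heq _ h'.symm)
        · refine ih hw.tail ?_ h'
          intro y hy
          refine hd y ?_
          rw [List.dropLast_cons_of_ne_nil (by simp)]
          exact List.mem_cons_of_mem _ hy
      · exact ha h1
end Lifte2

end StmtAux
namespace StmtAux
open List MultiDigraph

section Lifte3

variable {V E : Type} [DecidableEq V] [DecidableEq E] {G : MultiDigraph V E} {e : E}

theorem nodup_lifte (hne : G.tail e ≠ G.head e) (heq : ∀ a, G.head a = G.head e → a = e) :
    ∀ {L : List {a : E // a ≠ e}}, (G.contract e).IsWalk L →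
      (L.map (fun a => G.head a.1)).Nodup → ((lifte G e L).map G.head).Nodup := by
  intro L
  induction L with
  | nil => intro _ _; simp
  | cons a L ih =>
    intro hw hnd
    cases L with
    | nil => simp
    | cons b l =>
      rw [List.map_cons, List.nodup_cons] at hnd
      obtain ⟨hna, hnd⟩ := hnd
      have hmem : G.head a.1 ∉ (lifte G e (b :: l)).map G.head := by
        intro hc
        rcases mem_map_head_lifte hc with h' | h'
        · exact a.2 (heq _ h')
        · exact hna h'
      rcases cwalk_cases heq hw with h | ⟨h1, h2⟩
      · rw [lifte_cons_cons, if_pos h, List.map_cons, List.nodup_cons]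
        exact ⟨hmem, ih hw.tail hnd⟩
      · rw [lifte_cons_cons, if_neg (fun hc => hne (h1.symm.trans (hc.trans h2))),
          List.map_cons, List.map_cons, List.nodup_cons, List.nodup_cons]
        refine ⟨?_, ?_, ih hw.tail hnd⟩
        · simp only [List.mem_cons]
          rintro (hc | hc)
          · exact a.2 (heq _ hc)
          · exact hmem hc
        · refine no_insert heq hw.tail ?_
          intro y hy hc
          exact hna (by
            rw [← h1] at hc
            have : y ∈ b :: l := (List.dropLast_sublist _).mem hy
            exact hc ▸ List.mem_map_of_mem this)

end Lifte3

end StmtAux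
namespace StmtAux
open List MultiDigraph

theorem getLast?_cons_ne_nil {α : Type*} (x : α) {l : List α} (h : l ≠ []) :
    (x :: l).getLast? = l.getLast? := by
  cases l with
  | nil => exact absurd rfl h
  | cons b l => exact List.getLast?_cons_cons

section Lifte4

variable {V E : Type} [DecidableEq V] [DecidableEq E] {G : MultiDigraph V E} {e : E}

theorem cpath_parts (hne : G.tail e ≠ G.head e) (heq : ∀ a, G.head a = G.head e → a = e)
    {P' : List {a : E // a ≠ e}} (hp : (G.contract e).IsPath P') :
    (G.contract e).IsWalk P' ∧ (P'.map (fun a => G.head a.1)).Nodup ∧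
      ∀ f, P'.head? = some f →
        (G.contract e).tail f ∉ (P'.dropLast.map (fun a => G.head a.1)) := by
  obtain ⟨cw, cnd, ccond⟩ := (MultiDigraph.isPath_iff _ _).mp hp
  have hmapeq : ∀ (M : List {a : E // a ≠ e}),
      M.map ((G.contract e).head) = M.map (fun a => G.head a.1) :=
    fun M => List.map_congr_left (fun a _ => chead heq a)
  refine ⟨cw, by rw [← hmapeq]; exact cnd, ?_⟩
  intro f hf
  rw [← hmapeq]
  exact ccond f hf

theorem lifte_isPath (hne : G.tail e ≠ G.head e) (heq : ∀ a, G.head a = G.head e → a = e)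
    {P' : List {a : E // a ≠ e}} (hp : (G.contract e).IsPath P') (hn : P' ≠ []) :
    G.IsPath (lifte G e P') := by
  obtain ⟨cw, cnd, ccond⟩ := cpath_parts hne heq hp
  rw [MultiDigraph.isPath_iff]
  have hQne : lifte G e P' ≠ [] := lifte_ne_nil G e hn
  have hQnd : ((lifte G e P').map G.head).Nodup := nodup_lifte hne heq cw cnd
  refine ⟨lifte_isWalk hne heq cw, hQnd, ?_⟩
  intro f₀ hf₀
  rw [head?_lifte] at hf₀
  obtain ⟨f, hf, rfl⟩ := Option.map_eq_some_iff.mp hf₀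
  by_cases hx : G.tail f.1 = G.head e
  · have hcc := ccond f hf
    rw [ctail_pos hx] at hcc
    rw [hx]
    intro hmem
    have hmem' : G.head e ∈ (lifte G e P').map G.head :=
      ((List.dropLast_sublist _).map G.head).mem hmem
    refine no_insert heq cw ?_ hmem'
    intro y hy hc
    exact hcc (hc ▸ List.mem_map_of_mem hy)
  · have hcc := ccond f hf
    rw [ctail_neg hx] at hcc
    intro hmem
    have hD := (mem_map_dropLast_iff G.head hQnd hQne).mp hmem
    obtain ⟨hmem1, hlast1⟩ := hD
    rcases mem_map_head_lifte hmem1 with h' | h'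
    · exact hx h'
    · refine hcc ((mem_map_dropLast_iff (fun a => G.head a.1) cnd hn).mpr ⟨h', ?_⟩)
      rw [getLast?_lifte, Option.map_map] at hlast1
      exact hlast1

theorem lifte_isPath_cons (hne : G.tail e ≠ G.head e) (heq : ∀ a, G.head a = G.head e → a = e)
    {P' : List {a : E // a ≠ e}} (hp : (G.contract e).IsPath P') (hn : P' ≠ [])
    {f : {a : E // a ≠ e}} (hf : P'.head? = some f) (hfh : G.tail f.1 = G.head e) :
    G.IsPath (e :: lifte G e P') := by
  obtain ⟨cw, cnd, ccond⟩ := cpath_parts hne heq hp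
  have hcc := ccond f hf
  rw [ctail_pos hfh] at hcc
  have hQne : lifte G e P' ≠ [] := lifte_ne_nil G e hn
  have hQnd : ((lifte G e P').map G.head).Nodup := nodup_lifte hne heq cw cnd
  have hnoins : G.head e ∉ (lifte G e P').map G.head := by
    refine no_insert heq cw ?_
    intro y hy hc
    exact hcc (hc ▸ List.mem_map_of_mem hy)
  rw [MultiDigraph.isPath_iff]
  refine ⟨?_, ?_, ?_⟩
  · refine List.isChain_cons.mpr ⟨?_, lifte_isWalk hne heq cw⟩
    intro y hy
    rw [head?_lifte, hf] at hy
    obtain rfl : f.1 = y := by injection hy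
    exact hfh.symm
  · rw [List.map_cons, List.nodup_cons]
    exact ⟨hnoins, hQnd⟩
  · intro f₀ hf₀
    obtain rfl : e = f₀ := by injection hf₀
    rw [List.dropLast_cons_of_ne_nil hQne, List.map_cons]
    simp only [List.mem_cons]
    rintro (hc | hc)
    · exact hne hc
    · obtain ⟨hmem1, hlast1⟩ := (mem_map_dropLast_iff G.head hQnd hQne).mp hc
      rcases mem_map_head_lifte hmem1 with h' | h'
      · exact hne h'
      · refine hcc ((mem_map_dropLast_iff (fun a => G.head a.1) cnd hn).mpr ⟨h', ?_⟩)
        rw [getLast?_lifte, Option.map_map] at hlast1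
        exact hlast1

end Lifte4

end StmtAux
namespace StmtAux
open List MultiDigraph

section LiftForbidden

variable {V E : Type} [DecidableEq V] [DecidableEq E] {G : MultiDigraph V E} {e : E}

theorem lift_forbidden (hne : G.tail e ≠ G.head e) (heq : ∀ a, G.head a = G.head e → a = e)
    {eR' eL' : {a : E // a ≠ e}} {P' : List {a : E // a ≠ e}}
    (hF : (G.contract e).ForbiddenPath eR' eL' P') :
    ∃ P, G.ForbiddenPath eR'.1 eL'.1 P ∨
      (G.tail eR'.1 = G.head e ∧ G.ForbiddenPath e eL'.1 P) := by
  obtain ⟨hpath, hn, hsrc, hdst, hhead, hlast⟩ := hF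
  obtain ⟨f, hf⟩ : ∃ f, P'.head? = some f := by
    cases P' with
    | nil => exact absurd rfl hn
    | cons a l => exact ⟨a, rfl⟩
  obtain ⟨gl, hgl⟩ : ∃ gl, P'.getLast? = some gl := by
    cases hg : P'.getLast? with
    | none => exact absurd (List.getLast?_eq_none_iff.mp hg) hn
    | some g => exact ⟨g, rfl⟩
  set Q := lifte G e P' with hQ
  have hQne : Q ≠ [] := lifte_ne_nil G e hn
  have hheadQ : Q.head? = some f.1 := by rw [hQ, head?_lifte, hf]; rfl
  have hlastQ : Q.getLast? = some gl.1 := by rw [hQ, getLast?_lifte, hgl]; rfl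
  -- source relation
  have hceq : (G.contract e).tail f = (G.contract e).tail eR' := by
    rw [MultiDigraph.src, hf] at hsrc
    injection hsrc
  -- destination
  have hdstQ : G.dst Q = some (G.head eL'.1) := by
    rw [MultiDigraph.dst, hgl] at hdst
    rw [MultiDigraph.dst, hlastQ, Option.map_some]
    have : (G.contract e).head gl = (G.contract e).head eL' := by injection hdst
    rw [chead heq, chead heq] at this
    rw [this]
  -- last arc conditions
  have hglL : gl ≠ eL' := by rw [hgl] at hlast; intro hc; exact hlast (by rw [hc])
  have hlastQne : Q.getLast? ≠ some eL'.1 := by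
    rw [hlastQ]
    intro hc
    exact hglL (Subtype.ext (by injection hc))
  have hfR : f ≠ eR' := by rw [hf] at hhead; intro hc; exact hhead (by rw [hc])
  have hsrcQ : G.src Q = some (G.tail f.1) := by rw [MultiDigraph.src, hheadQ]; rfl
  by_cases hxh : G.tail f.1 = G.head e
  · by_cases hrh : G.tail eR'.1 = G.head e
    · -- case A with equal tails
      refine ⟨Q, Or.inl ⟨lifte_isPath hne heq hpath hn, hQne, ?_, hdstQ, ?_, hlastQne⟩⟩
      · rw [hsrcQ, hxh, hrh]
      · rw [hheadQ]
        intro hc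
        exact hfR (Subtype.ext (by injection hc))
    · -- case B : prepend e
      have hrt : G.tail eR'.1 = G.tail e := by
        rw [ctail_pos hxh, ctail_neg hrh] at hceq
        exact hceq.symm
      refine ⟨e :: Q, Or.inl ⟨lifte_isPath_cons hne heq hpath hn hf hxh, by simp, ?_, ?_, ?_, ?_⟩⟩
      · rw [MultiDigraph.src, List.head?_cons, Option.map_some, hrt]
      · rw [MultiDigraph.dst, getLast?_cons_ne_nil e hQne]
        exact hdstQ
      · rw [List.head?_cons]
        intro hc
        have hce : e = eR'.1 := by injection hc
        exact eR'.2 hce.symm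
      · rw [getLast?_cons_ne_nil e hQne]
        exact hlastQne
  · have hcf : (G.contract e).tail f = G.tail f.1 := ctail_neg hxh
    by_cases hrh : G.tail eR'.1 = G.head e
    · -- case C : use e as the right arc
      have hxt : G.tail f.1 = G.tail e := by
        rw [hcf, ctail_pos hrh] at hceq
        exact hceq
      refine ⟨Q, Or.inr ⟨hrh, lifte_isPath hne heq hpath hn, hQne, ?_, hdstQ, ?_, hlastQne⟩⟩
      · rw [hsrcQ, hxt]
      · rw [hheadQ]
        intro hc
        exact f.2 (by injection hc)
    · -- case A
      have hxr : G.tail f.1 = G.tail eR'.1 := by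
        rw [hcf, ctail_neg hrh] at hceq
        exact hceq
      refine ⟨Q, Or.inl ⟨lifte_isPath hne heq hpath hn, hQne, ?_, hdstQ, ?_, hlastQne⟩⟩
      · rw [hsrcQ, hxr]
      · rw [hheadQ]
        intro hc
        exact hfR (Subtype.ext (by injection hc))

end LiftForbidden

end StmtAux
namespace StmtAux
open List MultiDigraph

section Proje2

variable {V E : Type} [DecidableEq V] [DecidableEq E] {G : MultiDigraph V E} {e : E}

theorem cmap_head (heq : ∀ a, G.head a = G.head e → a = e) (M : List {a : E // a ≠ e}) :
    M.map (G.contract e).head = M.map (fun a => G.head a.1) :=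
  List.map_congr_left (fun a _ => chead heq a)

theorem map_head_proje (P : List E) :
    (proje e P).map (fun a => G.head a.1) = (P.filter (fun a => a ≠ e)).map G.head := by
  have h1 : (proje e P).map (fun a => G.head a.1)
      = ((proje e P).map Subtype.val).map G.head := by
    rw [List.map_map]; rfl
  rw [h1, proje_map_val]

theorem proje_nodup {P : List E} (Gnd : (P.map G.head).Nodup) :
    ((proje e P).map (fun a => G.head a.1)).Nodup := by
  rw [map_head_proje]
  exact Gnd.sublist ((List.filter_sublist (l := P)).map G.head)

theorem proje_getLast : ∀ {P : List E} {g : E} (_ : P.getLast? = some g) (hge : g ≠ e),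
    (proje e P).getLast? = some ⟨g, hge⟩ := by
  intro P
  induction P with
  | nil => intro g hg hge; simp at hg
  | cons a P ih =>
    intro g hg hge
    cases P with
    | nil =>
      simp only [List.getLast?_singleton, Option.some.injEq] at hg
      subst hg
      rw [proje_cons_ne e [] hge]
      rfl
    | cons b l =>
      rw [List.getLast?_cons_cons] at hg
      have ihh := ih hg hge
      by_cases ha : a = e
      · subst a; rw [proje_cons_e]; exact ihh
      · rw [proje_cons_ne e _ ha, getLast?_cons_ne_nil]
        · exact ihh
        · intro hc
          rw [hc] at ihh
          simp at ihh

theorem proje_cond {P : List E} (hn : P ≠ []) (Gnd : (P.map G.head).Nodup)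
    {g : {a : E // a ≠ e}} (hgl : (proje e P).getLast? = some g) (hgl2 : P.getLast? = some g.1)
    {x : V} (hx : x ∉ P.dropLast.map G.head) :
    x ∉ (proje e P).dropLast.map (fun a => G.head a.1) := by
  intro hmem
  have hRne : proje e P ≠ [] := by
    intro hc; rw [hc] at hgl; simp at hgl
  have cnd : ((proje e P).map (fun a => G.head a.1)).Nodup := proje_nodup Gnd
  obtain ⟨h1, h2⟩ := (mem_map_dropLast_iff (fun a => G.head a.1) cnd hRne).mp hmem
  rw [map_head_proje] at h1
  have h1' : x ∈ P.map G.head := ((List.filter_sublist (l := P)).map G.head).mem h1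
  refine hx ((mem_map_dropLast_iff G.head Gnd hn).mpr ⟨h1', ?_⟩)
  rw [hgl2]
  rw [hgl] at h2
  exact h2

end Proje2

end StmtAux
namespace StmtAux
open List MultiDigraph

section ProjForbidden

variable {V E : Type} [DecidableEq V] [DecidableEq E] {G : MultiDigraph V E} {e : E}

theorem proj_forbidden (hne : G.tail e ≠ G.head e) (heq : ∀ a, G.head a = G.head e → a = e)
    {eR eL : E} {eR' : {a : E // a ≠ e}} {P : List E}
    (hF : G.ForbiddenPath eR eL P) (heL : eL ≠ e)
    (hR : eR'.1 = eR ∨ (eR = e ∧ G.tail eR'.1 = G.head e)) :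
    ∃ P', (G.contract e).ForbiddenPath eR' ⟨eL, heL⟩ P' := by
  obtain ⟨hpath, hn, hsrc, hdst, hhead, hlast⟩ := hF
  obtain ⟨Gw, Gnd, Gcond⟩ := (MultiDigraph.isPath_iff G P).mp hpath
  obtain ⟨f₀, tl, rfl⟩ : ∃ f₀ tl, P = f₀ :: tl := by
    cases P with
    | nil => exact absurd rfl hn
    | cons a l => exact ⟨a, l, rfl⟩
  set P := f₀ :: tl with hP
  have hsrceq : G.tail f₀ = G.tail eR := by
    rw [MultiDigraph.src, hP, List.head?_cons, Option.map_some] at hsrc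
    injection hsrc
  have hheadne : f₀ ≠ eR := by
    intro hc; exact hhead (by rw [hP, List.head?_cons, hc])
  have Gcond0 : G.tail f₀ ∉ P.dropLast.map G.head := Gcond f₀ (by rw [hP, List.head?_cons])
  obtain ⟨glP, hgl⟩ : ∃ g, P.getLast? = some g := by
    cases hg : P.getLast? with
    | none => exact absurd (List.getLast?_eq_none_iff.mp hg) hn
    | some g => exact ⟨g, rfl⟩
  have hglheL : G.head glP = G.head eL := by
    rw [MultiDigraph.dst, hgl, Option.map_some] at hdst
    injection hdst
  have hglne : glP ≠ e := by
    intro hc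
    exact heL (heq eL (by rw [← hglheL, hc]))
  have hglneL : glP ≠ eL := by
    intro hc; exact hlast (by rw [hgl, hc])
  have hRgl : (proje e P).getLast? = some ⟨glP, hglne⟩ := proje_getLast hgl hglne
  have Rne : proje e P ≠ [] := by
    intro hc; rw [hc] at hRgl; simp at hRgl
  have cw : (G.contract e).IsWalk (proje e P) := proje_isWalk hne heq Gw
  have cdst : (G.contract e).dst (proje e P) = some ((G.contract e).head ⟨eL, heL⟩) := by
    rw [MultiDigraph.dst, hRgl, Option.map_some, chead heq, chead heq]
    exact congrArg some hglheL
  have clastne : (proje e P).getLast? ≠ some ⟨eL, heL⟩ := by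
    rw [hRgl]
    intro hc
    exact hglneL (congrArg Subtype.val (Option.some.inj hc))
  have cndC : ((proje e P).map (G.contract e).head).Nodup := by
    rw [cmap_head heq]; exact proje_nodup Gnd
  by_cases hf₀e : f₀ = e
  · subst f₀
    have heRR : eR'.1 = eR := by
      rcases hR with h | ⟨h, _⟩
      · exact h
      · exact absurd h.symm hheadne
    obtain ⟨g, tl', rfl⟩ : ∃ g tl', tl = g :: tl' := by
      cases tl with
      | nil =>
        exfalso
        apply hglne
        have : P.getLast? = some e := by rw [hP]; rfl
        rw [this] at hgl
        exact (Option.some.inj hgl).symm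
      | cons g tl' => exact ⟨g, tl', rfl⟩
    have h2 : G.head e = G.tail g := (List.isChain_cons_cons.mp Gw).1
    have hgne : g ≠ e := by
      intro hc; rw [hc] at h2; exact hne h2.symm
    have hR' : proje e P = ⟨g, hgne⟩ :: proje e tl' := by
      rw [hP, proje_cons_e, proje_cons_ne e tl' hgne]
    have headR : (proje e P).head? = some ⟨g, hgne⟩ := by rw [hR']; rfl
    have ctailg : (G.contract e).tail ⟨g, hgne⟩ = G.tail e := ctail_pos h2.symm
    have ctailR' : (G.contract e).tail eR' = G.tail e := by
      have h3 : G.tail eR'.1 = G.tail e := by rw [heRR, ← hsrceq]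
      rw [ctail_neg (by rw [h3]; exact hne), h3]
    refine ⟨proje e P, ?_, Rne, ?_, cdst, ?_, clastne⟩
    · rw [MultiDigraph.isPath_iff]
      refine ⟨cw, cndC, ?_⟩
      intro f hf
      rw [headR] at hf
      obtain rfl : (⟨g, hgne⟩ : {a : E // a ≠ e}) = f := by injection hf
      rw [ctailg, cmap_head heq]
      exact proje_cond hn Gnd hRgl hgl Gcond0
    · rw [MultiDigraph.src, headR, Option.map_some, ctailg, ctailR']
    · rw [headR]
      intro hc
      have : g = eR'.1 := congrArg Subtype.val (Option.some.inj hc)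
      rw [heRR] at this
      apply hne
      rw [hsrceq, ← this, ← h2]
  · have hR'' : proje e P = ⟨f₀, hf₀e⟩ :: proje e tl := by
      rw [hP, proje_cons_ne e tl hf₀e]
    have headR : (proje e P).head? = some ⟨f₀, hf₀e⟩ := by rw [hR'']; rfl
    by_cases hth : G.tail f₀ = G.head e
    · -- source of P is the contracted head; shortening may be needed
      have heP : e ∉ P := by
        intro hc
        have hdec := List.dropLast_append_getLast hn
        rw [← hdec] at hc
        rcases List.mem_append.mp hc with h | h
        · rw [hth] at Gcond0
          exact Gcond0 (List.mem_map_of_mem (f := G.head) h)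
        · have : P.getLast hn = glP := by
            have := List.getLast?_eq_getLast hn
            rw [hgl] at this
            exact (Option.some.inj this).symm
          rw [List.mem_singleton] at h
          exact hglne (by rw [← this]; exact h.symm)
      have hfilP : P.filter (fun a => a ≠ e) = P :=
        List.filter_eq_self.mpr (fun a ha => decide_eq_true (fun hc => heP (hc ▸ ha)))
      have hmapval : (proje e P).map Subtype.val = P := by rw [proje_map_val, hfilP]
      have hlenR : (proje e P).length = P.length := by
        have := congrArg List.length hmapval
        simpa using this
      have hvals : ∀ (i : ℕ) (hi : i < (proje e P).length),
          ((proje e P)[i]'hi).1 = P[i]'(by omega) := by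
        intro i hi
        have h1 : ((proje e P).map Subtype.val)[i]'(by rw [List.length_map]; exact hi)
            = ((proje e P)[i]'hi).1 := List.getElem_map _
        rw [List.getElem_of_eq hmapval] at h1
        exact h1.symm
      have heRR : eR'.1 = eR := by
        rcases hR with h | ⟨h, _⟩
        · exact h
        · exfalso
          apply hne
          rw [← hth, hsrceq, h]
      have ctailR' : (G.contract e).tail eR' = G.tail e :=
        ctail_pos (by rw [heRR, ← hsrceq]; exact hth)
      by_cases htt : G.tail e ∈ (proje e P).dropLast.map (fun a => G.head a.1)
      · -- shorten to a suffix
        obtain ⟨k, hk, hkeq⟩ := List.mem_iff_getElem.mp htt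
        rw [List.getElem_map, List.getElem_dropLast] at hkeq
        rw [List.length_map, List.length_dropLast] at hk
        have hk1 : k + 1 < (proje e P).length := by omega
        have hkR : G.head (((proje e P)[k]'(by omega)).1) = G.tail e := hkeq
        obtain ⟨spath, sne, ssrc, slast⟩ := suffix_path (G.contract e) cw cndC hk1
        have csrc : (G.contract e).src ((proje e P).drop (k+1))
            = some ((G.contract e).tail eR') := by
          rw [ssrc, ctailR', chead heq, hkR]
        have shead : ((proje e P).drop (k+1)).head? = some ((proje e P)[k+1]'hk1) := by
          rw [List.head?_drop]
          exact List.getElem?_eq_getElem hk1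
        have chd : ((proje e P).drop (k+1)).head? ≠ some eR' := by
          rw [shead]
          intro hc
          have hceq : ((proje e P)[k+1]'hk1) = eR' := Option.some.inj hc
          -- tail of this arc is tail e, but tail eR = head e
          have hchainc := List.isChain_iff_getElem.mp cw k (by omega)
          have hct : (G.contract e).tail ((proje e P)[k+1]'hk1) = G.tail e := by
            rw [← hchainc, chead heq, hkR]
          by_cases hrn : G.tail (((proje e P)[k+1]'hk1)).1 = G.head e
          · -- impossible: previous arc in P would be e
            have hchainG := List.isChain_iff_getElem.mp Gw k (by omega)
            have hPke : P[k]'(by omega) = e := heq _ (by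
              rw [hchainG, ← hvals (k+1) hk1]
              exact hrn)
            exact heP (hPke ▸ List.getElem_mem _)
          · rw [ctail_neg hrn] at hct
            apply hne
            rw [← hct, hceq, heRR, ← hsrceq, hth]
        have sdst : (G.contract e).dst ((proje e P).drop (k+1))
            = some ((G.contract e).head ⟨eL, heL⟩) := by
          rw [MultiDigraph.dst, slast]
          rw [MultiDigraph.dst] at cdst
          exact cdst
        have slastne : ((proje e P).drop (k+1)).getLast? ≠ some ⟨eL, heL⟩ := by
          rw [slast]; exact clastne
        exact ⟨_, spath, sne, csrc, sdst, chd, slastne⟩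
      · refine ⟨proje e P, ?_, Rne, ?_, cdst, ?_, clastne⟩
        · rw [MultiDigraph.isPath_iff]
          refine ⟨cw, cndC, ?_⟩
          intro f hf
          rw [headR] at hf
          obtain rfl : (⟨f₀, hf₀e⟩ : {a : E // a ≠ e}) = f := by injection hf
          rw [ctail_pos hth, cmap_head heq]
          exact htt
        · rw [MultiDigraph.src, headR, Option.map_some, ctail_pos hth, ctailR']
        · rw [headR]
          intro hc
          exact hheadne (by
            have := congrArg Subtype.val (Option.some.inj hc)
            rw [heRR] at this
            exact this)
    · -- source is an ordinary node
      have ctailf : (G.contract e).tail ⟨f₀, hf₀e⟩ = G.tail f₀ := ctail_neg hth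
      have ctailR' : (G.contract e).tail eR' = G.tail f₀ := by
        rcases hR with h | ⟨h, h2⟩
        · rw [ctail_neg (by rw [h, ← hsrceq]; exact hth), h, ← hsrceq]
        · rw [ctail_pos h2, hsrceq, h]
      refine ⟨proje e P, ?_, Rne, ?_, cdst, ?_, clastne⟩
      · rw [MultiDigraph.isPath_iff]
        refine ⟨cw, cndC, ?_⟩
        intro f hf
        rw [headR] at hf
        obtain rfl : (⟨f₀, hf₀e⟩ : {a : E // a ≠ e}) = f := by injection hf
        rw [ctailf, cmap_head heq]
        exact proje_cond hn Gnd hRgl hgl Gcond0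
      · rw [MultiDigraph.src, headR, Option.map_some, ctailf, ctailR']
      · rw [headR]
        intro hc
        have hval : f₀ = eR'.1 := congrArg Subtype.val (Option.some.inj hc)
        rcases hR with h | ⟨h, h2⟩
        · exact hheadne (by rw [hval, h])
        · exact hth (by rw [hval]; exact h2)

end ProjForbidden

end StmtAux
namespace StmtAux
open List MultiDigraph

section Sep

variable {V E : Type} [DecidableEq V] [DecidableEq E] {G : MultiDigraph V E} {e : E}

theorem lifte_sep : ∀ (L : List {a : E // a ≠ e}),
    (lifte G e L).Chain' (fun a b => a = e → b ≠ e) := by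
  intro L
  induction L with
  | nil => exact List.isChain_nil
  | cons a L ih =>
    cases L with
    | nil => exact List.isChain_singleton _
    | cons b l =>
      have hh : (lifte G e (b :: l)).head? = some b.1 := by rw [head?_lifte]; rfl
      rw [lifte_cons_cons]
      split
      · refine List.isChain_cons.mpr ⟨?_, ih⟩
        intro y hy
        rw [hh] at hy
        obtain rfl : b.1 = y := by injection hy
        exact (fun _ => b.2)
      · refine List.isChain_cons_cons.mpr ⟨fun hc => absurd hc a.2, ?_⟩
        refine List.isChain_cons.mpr ⟨?_, ih⟩
        intro y hy
        rw [hh] at hy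
        obtain rfl : b.1 = y := by injection hy
        exact (fun _ => b.2)

end Sep

end StmtAux
open StmtAux in
/-- for a join-free arc `e`, a walk of the contracted graph is an
omnitig iff it arises from an omnitig of `G` by deleting every occurrence of `e`. -/
theorem stmt_19 {V E : Type} [Fintype V] [Fintype E] [DecidableEq V] [DecidableEq E]
    (G : MultiDigraph V E) (hG : G.StronglyConnected)
    (e : E) (he : G.inDeg (G.head e) = 1)
    (W' : List {a : E // a ≠ e}) :
    (G.contract e).IsOmnitig W' ↔
      ∃ W : List E, G.IsOmnitig W ∧
        W'.map Subtype.val = W.filter (fun a => a ≠ e) := by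
  classical
  have heq : ∀ a : E, G.head a = G.head e → a = e := by
    intro a ha
    have h1 : Nat.card {x : E // G.head x = G.head e} = 1 := he
    have h2 := (Nat.card_eq_one_iff_unique.mp h1).1
    have h3 : (⟨a, ha⟩ : {x : E // G.head x = G.head e})
        = (⟨e, rfl⟩ : {x : E // G.head x = G.head e}) := Subsingleton.elim _ _
    exact congrArg Subtype.val h3
  by_cases hsl : G.tail e = G.head e
  · -- degenerate: `e` is a self-loop, hence the only arc
    have hWnil : W' = [] := by
      cases W' with
      | nil => rfl
      | cons a l =>
        exfalso
        have key : ∀ L : List E, G.IsWalk L → G.dst L = some (G.head e) →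
            G.src L = some (G.head e) := by
          intro L
          induction L using List.reverseRecOn with
          | nil => intro _ h; simp [MultiDigraph.dst] at h
          | append_singleton M x ih =>
            intro hw hd
            have hxl : (M ++ [x]).getLast? = some x := List.getLast?_concat
            have hx : G.head x = G.head e := by
              rw [MultiDigraph.dst, hxl, Option.map_some] at hd
              injection hd
            have hxe : x = e := heq x hx
            cases M with
            | nil =>
              simp [MultiDigraph.src, hxe, hsl]
            | cons m M' =>
              obtain ⟨hwM, -, hrel⟩ := List.isChain_append.mp hw
              obtain ⟨gm, hgm⟩ : ∃ g, (m :: M').getLast? = some g := by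
                cases hgm : (m :: M').getLast? with
                | none => exact absurd (List.getLast?_eq_none_iff.mp hgm) (by simp)
                | some g => exact ⟨g, rfl⟩
              have hrel' : G.head gm = G.tail e := by
                have h5 := hrel gm hgm x (by simp)
                rw [hxe] at h5
                exact h5
              have hdm : G.dst (m :: M') = some (G.head e) := by
                rw [MultiDigraph.dst, hgm, Option.map_some, hrel', hsl]
              have := ih hwM hdm
              rw [MultiDigraph.src] at this ⊢
              rw [List.head?_append_of_ne_nil]
              · exact this
              · simp
        have hnode : ∀ v : V, v = G.head e := by
          intro v
          rcases hG v (G.tail e) with h | ⟨L, hw, hs, hd⟩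
          · rw [h, hsl]
          · have hd' : G.dst L = some (G.head e) := by rw [hd, hsl]
            have := key L hw hd'
            rw [this] at hs
            exact (Option.some.inj hs).symm
        exact a.2 (heq a.1 (by rw [hnode (G.head a.1)]))
    subst hWnil
    have homni_nil : (G.contract e).IsOmnitig [] := by
      refine ⟨List.isChain_nil, ?_⟩
      intro i j hi hij hj
      simp at hj
    have homni_nilG : G.IsOmnitig [] := by
      refine ⟨List.isChain_nil, ?_⟩
      intro i j hi hij hj
      simp at hj
    exact iff_of_true homni_nil ⟨[], homni_nilG, by simp⟩
  · -- main case
    have hne : G.tail e ≠ G.head e := hsl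
    constructor
    · rintro ⟨cwalk, hforb⟩
      refine ⟨lifte G e W', ⟨lifte_isWalk hne heq cwalk, ?_⟩, (filter_lifte G e W').symm⟩
      intro I J hI hIJ hJ hEx
      obtain ⟨P, hP⟩ := hEx
      have hfil : (lifte G e W').filter (fun a => a ≠ e) = W'.map Subtype.val :=
        filter_lifte G e W'
      have hlen' : ((lifte G e W').filter (fun a => a ≠ e)).length = W'.length := by
        rw [hfil, List.length_map]
      have hI1 : I - 1 < (lifte G e W').length := by omega
      -- the left arc is not e
      have heL : (lifte G e W')[I-1]'hI1 ≠ e := by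
        intro hc
        obtain ⟨hpa, hna, hsa, hda, hha, hla⟩ := hP
        obtain ⟨glP, hgl⟩ : ∃ g, P.getLast? = some g := by
          cases hg : P.getLast? with
          | none => exact absurd (List.getLast?_eq_none_iff.mp hg) hna
          | some g => exact ⟨g, rfl⟩
        have hgh : G.head glP = G.head ((lifte G e W')[I-1]'hI1) := by
          rw [MultiDigraph.dst, hgl, Option.map_some] at hda
          injection hda
        have : glP = e := heq glP (by rw [hgh, hc])
        exact hla (by rw [hgl, this, hc])
      obtain ⟨hmi_lt, hmi_eq⟩ := filter_index_of (fun a => a ≠ e) (lifte G e W')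
        (I-1) hI1 (decide_eq_true heL)
      set m_i := ((lifte G e W').take (I-1)).countP (fun a => a ≠ e) with hmi_def
      have hmi_lt' : m_i < W'.length := by omega
      have hmi_val : (W'[m_i]'hmi_lt').1 = (lifte G e W')[I-1]'hI1 := by
        rw [← hmi_eq]
        rw [List.getElem_of_eq hfil hmi_lt]
        exact (List.getElem_map _).symm ▸ rfl
      by_cases hJe : (lifte G e W')[J]'hJ = e
      · -- the right arc is an inserted copy of e
        have hJlast : J + 1 < (lifte G e W').length := by
          by_contra hcon
          have hJl : (lifte G e W').length - 1 = J := by omega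
          have hgW : (lifte G e W').getLast? = some e := by
            rw [List.getLast?_eq_getElem?, hJl, List.getElem?_eq_getElem hJ, hJe]
          rw [getLast?_lifte] at hgW
          cases hW : W'.getLast? with
          | none => rw [hW] at hgW; simp at hgW
          | some g =>
            rw [hW] at hgW
            simp only [Option.map_some, Option.some.injEq] at hgW
            exact g.2 hgW
        have hJ1ne : (lifte G e W')[J+1]'hJlast ≠ e := by
          have := List.isChain_iff_getElem.mp (lifte_sep (G := G) W') J (by omega)
          exact this hJe
        have htail : G.tail ((lifte G e W')[J+1]'hJlast) = G.head e := by
          have := List.isChain_iff_getElem.mp (lifte_isWalk hne heq cwalk) J (by omega)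
          rw [← this, hJe]
        obtain ⟨hmj_lt, hmj_eq⟩ := filter_index_of (fun a => a ≠ e) (lifte G e W')
          (J+1) hJlast (decide_eq_true hJ1ne)
        set m_j := ((lifte G e W').take (J+1)).countP (fun a => a ≠ e) with hmj_def
        have hmj_lt' : m_j < W'.length := by omega
        have hmj_val : (W'[m_j]'hmj_lt').1 = (lifte G e W')[J+1]'hJlast := by
          rw [← hmj_eq]
          rw [List.getElem_of_eq hfil hmj_lt]
          exact (List.getElem_map _).symm ▸ rfl
        have hmono : m_i < m_j :=
          countP_take_mono (fun a => a ≠ e) (lifte G e W') (by omega) hI1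
            (decide_eq_true heL)
        have hPJ : G.ForbiddenPath e ((lifte G e W')[I-1]'hI1) P := by
          rw [hJe] at hP; exact hP
        obtain ⟨P', hP'⟩ := proj_forbidden (eR' := W'[m_j]'hmj_lt') hne heq hPJ heL
          (Or.inr ⟨rfl, by rw [hmj_val]; exact htail⟩)
        refine hforb (m_i + 1) m_j (by omega) (by omega) hmj_lt' ⟨P', ?_⟩
        have hsub : (⟨(lifte G e W')[I-1]'hI1, heL⟩ : {a : E // a ≠ e}) = W'[m_i]'hmi_lt' :=
          (Subtype.ext hmi_val).symm
        rw [hsub] at hP'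
        exact hP'
      · obtain ⟨hmJ_lt, hmJ_eq⟩ := filter_index_of (fun a => a ≠ e) (lifte G e W')
          J hJ (decide_eq_true hJe)
        set m_J := ((lifte G e W').take J).countP (fun a => a ≠ e) with hmJ_def
        have hmJ_lt' : m_J < W'.length := by omega
        have hmJ_val : (W'[m_J]'hmJ_lt').1 = (lifte G e W')[J]'hJ := by
          rw [← hmJ_eq]
          rw [List.getElem_of_eq hfil hmJ_lt]
          exact (List.getElem_map _).symm ▸ rfl
        have hmono : m_i < m_J :=
          countP_take_mono (fun a => a ≠ e) (lifte G e W') (by omega) hI1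
            (decide_eq_true heL)
        obtain ⟨P', hP'⟩ := proj_forbidden (eR' := W'[m_J]'hmJ_lt') hne heq hP heL
          (Or.inl hmJ_val)
        refine hforb (m_i + 1) m_J (by omega) (by omega) hmJ_lt' ⟨P', ?_⟩
        have hsub : (⟨(lifte G e W')[I-1]'hI1, heL⟩ : {a : E // a ≠ e}) = W'[m_i]'hmi_lt' :=
          (Subtype.ext hmi_val).symm
        rw [hsub] at hP'
        exact hP'
    · rintro ⟨W, ⟨Gwalk, hGforb⟩, hfil⟩
      have hW'eq : proje e W = W' := by
        apply List.map_injective_iff.mpr Subtype.val_injective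
        rw [proje_map_val, hfil]
      constructor
      · rw [← hW'eq]
        exact proje_isWalk hne heq Gwalk
      · intro i j hi hij hj hEx
        obtain ⟨P', hP'⟩ := hEx
        have hlen : (W.filter (fun a => a ≠ e)).length = W'.length := by
          rw [← hfil, List.length_map]
        obtain ⟨M_j, hMj, hpj, hcj, hej⟩ :=
          filter_surj_index (fun a => a ≠ e) W j (by omega)
        obtain ⟨M_i, hMi, hpi, hci, hei⟩ :=
          filter_surj_index (fun a => a ≠ e) W (i-1) (by omega)
        have hi1 : i - 1 < W'.length := by omega
        have hvj : (W'[j]'hj).1 = W[M_j]'hMj := by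
          have h1 : (W'.map Subtype.val)[j]? = some ((W'[j]'hj).1) := by
            rw [List.getElem?_eq_getElem (by rw [List.length_map]; exact hj)]
            rw [List.getElem_map]
          rw [hfil, hej] at h1
          exact (Option.some.inj h1).symm
        have hvi : (W'[i-1]'hi1).1 = W[M_i]'hMi := by
          have h1 : (W'.map Subtype.val)[i-1]? = some ((W'[i-1]'hi1).1) := by
            rw [List.getElem?_eq_getElem (by rw [List.length_map]; exact hi1)]
            rw [List.getElem_map]
          rw [hfil, hei] at h1
          exact (Option.some.inj h1).symm
        have hMmono : M_i < M_j := by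
          by_contra hcon
          have := countP_take_le (fun a => a ≠ e) W (Nat.le_of_not_lt hcon)
          omega
        obtain ⟨P, hPor⟩ := lift_forbidden hne heq hP'
        rcases hPor with hPP | ⟨hth, hPP⟩
        · refine hGforb (M_i + 1) M_j (by omega) (by omega) hMj ⟨P, ?_⟩
          rw [hvj, hvi] at hPP
          exact hPP
        · -- right arc is preceded by e in W
          obtain ⟨Mj', rfl⟩ : ∃ m, M_j = m + 1 := ⟨M_j - 1, by omega⟩
          have hMj' : Mj' < W.length := by omega
          have hWMj' : W[Mj']'hMj' = e := by
            apply heq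
            have hchain := List.isChain_iff_getElem.mp Gwalk Mj' (by omega)
            rw [hchain, ← hvj]
            exact hth
          have hMine : M_i ≠ Mj' := by
            intro hc
            apply (W'[i-1]'hi1).2
            subst hc
            rw [hvi]
            exact hWMj'
          refine hGforb (M_i + 1) Mj' (by omega) (by omega) hMj' ⟨P, ?_⟩
          rw [hvi, ← hWMj'] at hPP
          exact hPP
end
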